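/- arXiv:2403.02345 — 15 statements merged into one kernel-verified Lean document; each statement's English description precedes it below -/
import Mathlib

section
/- For every a ∈ (0,1), the quadratic function h_a(x) = x² - ((a+2)/4)x - 1/(16(a-1)) is strictly positive for all real x. -/
theorem stmt_0 (a : ℝ) (ha : a ∈ Set.Ioo (0:ℝ) 1) :
    ∀ x : ℝ, 0 < x^2 - ((a+2)/4)*x - 1/(16*(a-1)) := by
  obtain ⟨h0, h1⟩ := ha
  intro x
  have hne : a - 1 ≠ 0 := by linarith
  have ht : 1/(16*(a-1)) * (16*(a-1)) = 1 := by field_simp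
  nlinarith [sq_nonneg (x - (a+2)/8), sq_nonneg a, mul_pos h0 h0,
    mul_pos (mul_pos h0 h0) (show (0:ℝ) < a + 3 by linarith),
    mul_pos (mul_pos h0 h0) (show (0:ℝ) < 1 - a by linarith),
    mul_nonneg (show (0:ℝ) ≤ 1 - a by linarith) (sq_nonneg (x - (a+2)/8))]
end

section
/- For every a ∈ (1,2], the quadratic function h_a(x) = x² - ((a+2)/4)x - 1/(16(a-1)) is strictly negative for all x ∈ (0,1). -/
theorem stmt_1 (a : ℝ) (ha : a ∈ Set.Ioc (1:ℝ) 2) :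
    ∀ x ∈ Set.Ioo (0:ℝ) 1, x^2 - ((a+2)/4)*x - 1/(16*(a-1)) < 0 := by
  obtain ⟨ha1, ha2⟩ := ha
  intro x ⟨hx0, hx1⟩
  have h1 : a - 1 > 0 := by linarith
  have hinv : 1/(16*(a-1)) * (16*(a-1)) = 1 := by
    field_simp
  have hpos : 1/(16*(a-1)) > 0 := by positivity
  nlinarith [mul_pos hx0 (sub_pos.mpr hx1), sq_nonneg (2*(a-1) + 2*(a-2)),
    mul_pos h1 hpos, sq_nonneg (x - 1), sq_nonneg (4*(a-1)*x - 1),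
    mul_pos (mul_pos hx0 (sub_pos.mpr hx1)) h1]
end

section
/- For every real a > 1, (a₁a₂ + a₁)(a₁a₂ - a₂) = (a - 3/2)²/(64(a-1)²). -/
theorem stmt_5 (a : ℝ) (ha : 1 < a)
    (a₁ a₂ : ℝ)
    (ha₁ : a₁ = (Real.sqrt ((a+2)^2 + 4/(a-1)) + a + 2)/8)
    (ha₂ : a₂ = (Real.sqrt ((a+2)^2 + 4/(a-1)) - (a+2))/8) :
    (a₁*a₂ + a₁) * (a₁*a₂ - a₂) = (a - 3/2)^2 / (64*(a-1)^2) := by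
  have h1 : a - 1 ≠ 0 := by linarith
  have hd : (0:ℝ) < a - 1 := by linarith
  have hnn : (0:ℝ) ≤ (a+2)^2 + 4/(a-1) := by positivity
  set s := Real.sqrt ((a+2)^2 + 4/(a-1)) with hsdef
  have hs : s^2 = (a+2)^2 + 4/(a-1) := Real.sq_sqrt hnn
  subst ha₁ ha₂
  have hs' : s^2 * (a-1) = (a+2)^2 * (a-1) + 4 := by
    field_simp at hs; linarith [hs]
  field_simp
  nlinarith [hs', sq_nonneg s, sq_nonneg (a-1)]
end

section
/- For every real a > 1, √((a₂+1)/a₂) - √((a₁-1)/a₁) = 2a·√((a-1)(a+3)) / √(a² + a - 3/2 + |a - 3/2|). -/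
private lemma sq_cancel {x y : ℝ} (hx : 0 ≤ x) (hy : 0 ≤ y) (h : x^2 = y^2) : x = y := by
  rw [← Real.sqrt_sq hx, h, Real.sqrt_sq hy]

theorem stmt_7 (a : ℝ) (ha : 1 < a)
    (a₁ a₂ : ℝ)
    (ha₁ : a₁ = (Real.sqrt ((a+2)^2 + 4/(a-1)) + a + 2)/8)
    (ha₂ : a₂ = (Real.sqrt ((a+2)^2 + 4/(a-1)) - (a+2))/8) :
    Real.sqrt ((a₂+1)/a₂) - Real.sqrt ((a₁-1)/a₁) =
      2*a*Real.sqrt ((a-1)*(a+3)) / Real.sqrt (a^2 + a - 3/2 + |a - 3/2|) := by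
  have ham : (0:ℝ) < a - 1 := by linarith
  set D := Real.sqrt ((a+2)^2 + 4/(a-1)) with hD
  have hs0 : (0:ℝ) ≤ (a+2)^2 + 4/(a-1) := by positivity
  have hD2 : D^2 = (a+2)^2 + 4/(a-1) := Real.sq_sqrt hs0
  have hD2' : D^2 * (a-1) = (a+2)^2 * (a-1) + 4 := by
    rw [hD2]; field_simp
  have hDnn : 0 ≤ D := Real.sqrt_nonneg _
  have hDgt : a + 2 < D := by
    nlinarith [div_pos (by norm_num : (0:ℝ) < 4) ham]
  have ha₂pos : 0 < a₂ := by rw [ha₂]; linarith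
  have ha₁pos : 0 < a₁ := by rw [ha₁]; linarith
  have key2 : (a₂+1)/a₂ = 1 + 2*(a-1)*(D+(a+2)) := by
    rw [div_eq_iff (ne_of_gt ha₂pos), ha₂]
    linear_combination (-(1:ℝ)/4) * hD2'
  have key1 : (a₁-1)/a₁ = 1 - 2*(a-1)*(D-(a+2)) := by
    rw [div_eq_iff (ne_of_gt ha₁pos), ha₁]
    linear_combination ((1:ℝ)/4) * hD2'
  have hprod : (1 + 2*(a-1)*(D+(a+2))) * (1 - 2*(a-1)*(D-(a+2))) = (2*a-3)^2 := by
    linear_combination (-4*(a-1)) * hD2'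
  have hX : (0:ℝ) ≤ 1 + 2*(a-1)*(D+(a+2)) := by nlinarith
  have hY : (0:ℝ) ≤ 1 - 2*(a-1)*(D-(a+2)) := by nlinarith
  have hx2 : (Real.sqrt ((a₂+1)/a₂))^2 = 1 + 2*(a-1)*(D+(a+2)) := by
    rw [key2]; exact Real.sq_sqrt hX
  have hy2 : (Real.sqrt ((a₁-1)/a₁))^2 = 1 - 2*(a-1)*(D-(a+2)) := by
    rw [key1]; exact Real.sq_sqrt hY
  have hxy : Real.sqrt ((a₂+1)/a₂) * Real.sqrt ((a₁-1)/a₁) = |2*a-3| := by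
    rw [key2, key1, ← Real.sqrt_mul hX, hprod, Real.sqrt_sq_eq_abs]
  have hyx : Real.sqrt ((a₁-1)/a₁) ≤ Real.sqrt ((a₂+1)/a₂) := by
    rw [key1, key2]
    apply Real.sqrt_le_sqrt
    nlinarith
  have hL0 : 0 ≤ Real.sqrt ((a₂+1)/a₂) - Real.sqrt ((a₁-1)/a₁) := by linarith
  have hL2 : (Real.sqrt ((a₂+1)/a₂) - Real.sqrt ((a₁-1)/a₁))^2
      = 2 + 4*(a-1)*(a+2) - 2*|2*a-3| := by
    have e : (Real.sqrt ((a₂+1)/a₂) - Real.sqrt ((a₁-1)/a₁))^2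
        = (Real.sqrt ((a₂+1)/a₂))^2 + (Real.sqrt ((a₁-1)/a₁))^2
          - 2*(Real.sqrt ((a₂+1)/a₂) * Real.sqrt ((a₁-1)/a₁)) := by ring
    rw [e, hx2, hy2, hxy]; ring
  have hP : (0:ℝ) ≤ (a-1)*(a+3) := le_of_lt (mul_pos (by linarith) (by linarith))
  rcases le_total a (3/2) with hc | hc
  · -- a ≤ 3/2 : denominator is a
    have habs : |a - 3/2| = 3/2 - a := by rw [abs_of_nonpos (by linarith)]; ring
    have habs2 : |2*a - 3| = 3 - 2*a := by rw [abs_of_nonpos (by linarith)]; ring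
    have hden : a^2 + a - 3/2 + |a - 3/2| = a^2 := by rw [habs]; ring
    rw [hden, Real.sqrt_sq (by linarith : (0:ℝ) ≤ a)]
    have hra : 2*a*Real.sqrt ((a-1)*(a+3)) / a = 2*Real.sqrt ((a-1)*(a+3)) := by
      field_simp
    rw [hra]
    apply sq_cancel hL0 (by positivity)
    rw [hL2, habs2, mul_pow, Real.sq_sqrt hP]
    ring
  · -- 3/2 ≤ a : denominator is √((a-1)(a+3))
    have habs : |a - 3/2| = a - 3/2 := abs_of_nonneg (by linarith)
    have habs2 : |2*a - 3| = 2*a - 3 := abs_of_nonneg (by linarith)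
    have hden : a^2 + a - 3/2 + |a - 3/2| = (a-1)*(a+3) := by rw [habs]; ring
    have hPpos : (0:ℝ) < (a-1)*(a+3) := mul_pos (by linarith) (by linarith)
    rw [hden, mul_div_assoc, div_self (ne_of_gt (Real.sqrt_pos.mpr hPpos)), mul_one]
    apply sq_cancel hL0 (by linarith)
    rw [hL2, habs2]; ring
end

section
/- For every real a ∈ (1, 3/2], (a₂·√((a₁-1)/a₁) + a₁·√((a₂+1)/a₂))² = (a²(a-1)(a + 5/2)² - 2a + 3) / (4(a-1)). -/
theorem stmt_8 (a : ℝ) (ha : a ∈ Set.Ioc (1:ℝ) (3/2))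
    (a₁ a₂ : ℝ)
    (ha₁ : a₁ = (Real.sqrt ((a+2)^2 + 4/(a-1)) + a + 2)/8)
    (ha₂ : a₂ = (Real.sqrt ((a+2)^2 + 4/(a-1)) - (a+2))/8) :
    (a₂ * Real.sqrt ((a₁-1)/a₁) + a₁ * Real.sqrt ((a₂+1)/a₂))^2 =
      (a^2*(a-1)*(a + 5/2)^2 - 2*a + 3) / (4*(a-1)) := by
  obtain ⟨hal, har⟩ := ha
  have h1 : (0:ℝ) < a - 1 := by linarith
  set S := Real.sqrt ((a+2)^2 + 4/(a-1)) with hS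
  have hSnn : 0 ≤ S := Real.sqrt_nonneg _
  have hS2 : S^2 = (a+2)^2 + 4/(a-1) := Real.sq_sqrt (by positivity)
  have h4 : (4:ℝ)/(a-1) * (a-1) = 4 := div_mul_cancel₀ _ (ne_of_gt h1)
  have hS2' : S^2 * (a-1) = (a+2)^2 * (a-1) + 4 := by
    linear_combination (a-1)*hS2 + h4
  have ha₂pos : 0 < a₂ := by
    have hlt : a + 2 < S := by
      nlinarith [hS2', sq_nonneg (S - (a+2)), mul_pos h1 (show (0:ℝ) < S + (a+2) + 1 by linarith)]
    rw [ha₂]; linarith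
  have ha₁ge : 1 ≤ a₁ := by
    have h6 : 6 - a ≤ S := by
      nlinarith [hS2', sq_nonneg (2*a-3), mul_pos h1 (show (0:ℝ) < S + (6-a) by linarith)]
    rw [ha₁]; linarith
  have ha₁pos : 0 < a₁ := by linarith
  have hp : a₁ * a₂ = 1 / (16*(a-1)) := by
    rw [ha₁, ha₂]
    rw [eq_div_iff (ne_of_gt (by linarith : (0:ℝ) < 16*(a-1)))]
    nlinarith [hS2']
  have hd : a₁ - a₂ = (a+2)/4 := by rw [ha₁, ha₂]; ring
  have hAnn : 0 ≤ a₂^2 * ((a₁-1)/a₁) :=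
    mul_nonneg (sq_nonneg _) (div_nonneg (by linarith) ha₁pos.le)
  have hBnn : 0 ≤ a₁^2 * ((a₂+1)/a₂) :=
    mul_nonneg (sq_nonneg _) (div_nonneg (by linarith) ha₂pos.le)
  have hA : a₂ * Real.sqrt ((a₁-1)/a₁) = Real.sqrt (a₂^2 * ((a₁-1)/a₁)) := by
    rw [Real.sqrt_mul (sq_nonneg _), Real.sqrt_sq ha₂pos.le]
  have hB : a₁ * Real.sqrt ((a₂+1)/a₂) = Real.sqrt (a₁^2 * ((a₂+1)/a₂)) := by
    rw [Real.sqrt_mul (sq_nonneg _), Real.sqrt_sq ha₁pos.le]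
  have hAB : (a₂^2 * ((a₁-1)/a₁)) * (a₁^2 * ((a₂+1)/a₂)) = ((3-2*a)/(16*(a-1)))^2 := by
    have : (a₂^2 * ((a₁-1)/a₁)) * (a₁^2 * ((a₂+1)/a₂))
        = (a₁*a₂) * ((a₁*a₂) + (a₁ - a₂) - 1) := by
      field_simp
      ring
    rw [this, hp, hd]
    field_simp
    ring
  have hprod : Real.sqrt (a₂^2 * ((a₁-1)/a₁)) * Real.sqrt (a₁^2 * ((a₂+1)/a₂))
      = (3-2*a)/(16*(a-1)) := by
    rw [← Real.sqrt_mul hAnn, hAB,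
      Real.sqrt_sq (div_nonneg (by linarith) (by linarith))]
  rw [hA, hB, add_sq, Real.sq_sqrt hAnn, Real.sq_sqrt hBnn, mul_assoc, hprod]
  have hsum : a₂^2 * ((a₁-1)/a₁) + a₁^2 * ((a₂+1)/a₂)
      = (a₁-a₂)^2 + 2*(a₁*a₂) + 3*(a₁-a₂) + (a₁-a₂)^3/(a₁*a₂) := by
    field_simp
    ring
  rw [hp, hd] at hsum
  have hfin : ((a+2)/4)^2 + 2*(1/(16*(a-1))) + 3*((a+2)/4) + ((a+2)/4)^3/(1/(16*(a-1)))
      + 2*((3-2*a)/(16*(a-1))) = (a^2*(a-1)*(a + 5/2)^2 - 2*a + 3)/(4*(a-1)) := by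
    field_simp
    ring
  linarith [hsum, hfin]
end

section
/- For every real a ∈ (3/2, 2], (a₂·√((a₁-1)/a₁) + a₁·√((a₂+1)/a₂))² = a²(a-1)(a + 5/2)² / (4(a-1)) = a²(a + 5/2)²/4. -/
theorem stmt_9 (a : ℝ) (ha : a ∈ Set.Ioc (3/2 : ℝ) 2)
    (a₁ a₂ : ℝ)
    (ha₁ : a₁ = (Real.sqrt ((a+2)^2 + 4/(a-1)) + a + 2)/8)
    (ha₂ : a₂ = (Real.sqrt ((a+2)^2 + 4/(a-1)) - (a+2))/8) :
    (a₂ * Real.sqrt ((a₁-1)/a₁) + a₁ * Real.sqrt ((a₂+1)/a₂))^2 =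
        a^2*(a-1)*(a + 5/2)^2 / (4*(a-1)) ∧
      a^2*(a-1)*(a + 5/2)^2 / (4*(a-1)) = a^2*(a + 5/2)^2/4 := by
  obtain ⟨hal, har⟩ := ha
  have h1 : (0:ℝ) < a - 1 := by linarith
  have h23 : (0:ℝ) < 2*a - 3 := by linarith
  set D := Real.sqrt ((a+2)^2 + 4/(a-1)) with hDdef
  have hDnn : 0 ≤ D := Real.sqrt_nonneg _
  have hfr : (0:ℝ) < 4/(a-1) := div_pos (by norm_num) h1
  have hD2 : D^2 = (a+2)^2 + 4/(a-1) :=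
    Real.sq_sqrt (by nlinarith [sq_nonneg (a+2)])
  have hDa : a + 2 < D := by nlinarith
  have hD6 : 6 - a < D := by
    have h4 : 32 - 16*a < 4/(a-1) := by
      rw [lt_div_iff₀ h1]; nlinarith [sq_nonneg (2*a-3)]
    nlinarith
  have ha1gt : 1 < a₁ := by rw [ha₁]; linarith
  have ha1pos : 0 < a₁ := by linarith
  have ha2pos : 0 < a₂ := by rw [ha₂]; linarith
  have hne1 : a₁ ≠ 0 := ne_of_gt ha1pos
  have hne2 : a₂ ≠ 0 := ne_of_gt ha2pos
  have hs : a₁ - a₂ = (a+2)/4 := by rw [ha₁, ha₂]; ring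
  obtain ⟨b, hb⟩ : ∃ b : ℝ, (a-1)*b = 1 := ⟨(a-1)⁻¹, mul_inv_cancel₀ (ne_of_gt h1)⟩
  have hfrac : (a-1)*D^2 = (a-1)*(a+2)^2 + 4 := by
    rw [hD2]; field_simp
  have hq : a₁*a₂ = b/16 := by
    rw [ha₁, ha₂]
    have hb4 : 4*b = D^2 - (a+2)^2 := by
      linear_combination (-b)*hfrac + (D^2-(a+2)^2)*hb
    linear_combination -hb4/64
  -- key polynomial identity
  have key' : a₂^3*(a₁-1) + 2*(2*a-3)*a₁^2*a₂^2 + a₁^3*(a₂+1)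
      = a^2*(2*a+5)^2/16*(a₁*a₂) := by
    linear_combination
      ((1/4:ℝ) + (-1/2:ℝ)*a₂ + (1:ℝ)*a₂^2 + (1/2:ℝ)*a₁ + (3/2:ℝ)*a₁*a₂ + (-5:ℝ)*a₁*a₂^2 + (1:ℝ)*a₁^2 + (1:ℝ)*a₁^2*a₂ + (1/4:ℝ)*b*a₂ + (1/4:ℝ)*a + (-1/4:ℝ)*a*a₂ + (1/4:ℝ)*a*a₁ + (1/4:ℝ)*a*a₁*a₂ + (4:ℝ)*a*a₁*a₂^2 + (-1/4:ℝ)*a*b*a₂ + (1/16:ℝ)*a^2) * hs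
      + ((7/4:ℝ) + (-2:ℝ)*a₂ + (-4:ℝ)*a₂^2 + (-1/4:ℝ)*b + (1:ℝ)*a + (1:ℝ)*a*a₂ + (4:ℝ)*a*a₂^2 + (1/4:ℝ)*a*b + (-3/2:ℝ)*a^2 + (1:ℝ)*a^2*a₂ + (-5/4:ℝ)*a^3 + (-1/4:ℝ)*a^4) * hq
      + ((-1/8:ℝ) + (1/64:ℝ)*b + (-3/16:ℝ)*a + (-3/32:ℝ)*a^2 + (-1/64:ℝ)*a^3) * hb
  -- sqrt facts
  have hx : (0:ℝ) ≤ (a₁-1)/a₁ := div_nonneg (by linarith) ha1pos.le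
  have hy : (0:ℝ) ≤ (a₂+1)/a₂ := div_nonneg (by linarith) ha2pos.le
  have hprod : (a₁-1)/a₁ * ((a₂+1)/a₂) = (2*a-3)^2 := by
    have hmul : (a₁-1)*(a₂+1) = (2*a-3)^2 * (a₁*a₂) := by
      linear_combination hs + (-4*(a-1)*(a-2))*hq + (-(a-2)/4)*hb
    field_simp
    linear_combination hmul
  have hxy : Real.sqrt ((a₁-1)/a₁) * Real.sqrt ((a₂+1)/a₂) = 2*a-3 := by
    rw [← Real.sqrt_mul hx, hprod, Real.sqrt_sq h23.le]
  have h2nd : a^2*(a-1)*(a + 5/2)^2 / (4*(a-1)) = a^2*(a + 5/2)^2/4 := by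
    field_simp
  refine ⟨?_, h2nd⟩
  rw [h2nd]
  have expand : (a₂ * Real.sqrt ((a₁-1)/a₁) + a₁ * Real.sqrt ((a₂+1)/a₂))^2
      = a₂^2 * (Real.sqrt ((a₁-1)/a₁))^2
        + 2*(a₁*a₂)*(Real.sqrt ((a₁-1)/a₁) * Real.sqrt ((a₂+1)/a₂))
        + a₁^2 * (Real.sqrt ((a₂+1)/a₂))^2 := by ring
  rw [expand, Real.sq_sqrt hx, Real.sq_sqrt hy, hxy]
  field_simp
  linear_combination 16*key'
end

section
/- For every real a ∈ (1, 3/2], A₁ = 0, and for every a ∈ (3/2, 2], A₁ = 16(a-1)(1 - a/√(a² + 2a - 3)). In both cases A₁ ≥ 0. -/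
set_option maxHeartbeats 1000000 in
theorem stmt_10 (a : ℝ) (ha : a ∈ Set.Ioc (1:ℝ) 2)
    (a₁ a₂ A₁ : ℝ)
    (ha₁ : a₁ = (Real.sqrt ((a+2)^2 + 4/(a-1)) + a + 2)/8)
    (ha₂ : a₂ = (Real.sqrt ((a+2)^2 + 4/(a-1)) - (a+2))/8)
    (hA₁ : A₁ = 16*(a-1) - (2*a/(a₁+a₂)) * (Real.sqrt ((a₂+1)/a₂) - Real.sqrt ((a₁-1)/a₁))) :
    (a ≤ 3/2 → A₁ = 0) ∧
      (3/2 < a → A₁ = 16*(a-1)*(1 - a / Real.sqrt (a^2 + 2*a - 3))) ∧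
      0 ≤ A₁ := by
  obtain ⟨ha1, ha2'⟩ := ha
  have ham1 : (0:ℝ) < a - 1 := by linarith
  set v := Real.sqrt (a^2 + 2*a - 3) with hvdef
  set s := Real.sqrt ((a+2)^2 + 4/(a-1)) with hsdef
  have hvnn : 0 ≤ v := Real.sqrt_nonneg _
  have hv2 : v^2 = a^2 + 2*a - 3 := Real.sq_sqrt (by nlinarith)
  have hsarg : (0:ℝ) < (a+2)^2 + 4/(a-1) := by positivity
  have hs2 : s^2 = (a+2)^2 + 4/(a-1) := Real.sq_sqrt hsarg.le
  have hspos : 0 < s := Real.sqrt_pos.mpr hsarg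
  clear_value v s
  have hs2' : (a-1) * s^2 = (a-1)*(a+2)^2 + 4 := by
    rw [hs2]; field_simp
  have hrel : a * v = (a-1) * s := by
    have h1 : (a*v)^2 = ((a-1)*s)^2 := by
      rw [mul_pow, mul_pow, hv2]
      nlinarith [hs2']
    have h2 : 0 ≤ a * v := mul_nonneg (by linarith) hvnn
    have h3 : 0 ≤ (a-1) * s := mul_nonneg ham1.le hspos.le
    have h4 := congrArg Real.sqrt h1
    rwa [Real.sqrt_sq h2, Real.sqrt_sq h3] at h4
  have h4pos : (0:ℝ) < 4/(a-1) := by positivity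
  have hsgt : a + 2 < s := by nlinarith [hs2, hspos]
  have ha₂pos : 0 < a₂ := by rw [ha₂]; linarith
  have ha₁pos : 0 < a₁ := by rw [ha₁]; linarith
  have hinv2 : a₂ * (2*(a-1)*(s+(a+2))) = 1 := by
    rw [ha₂]; linear_combination (1/4) * hs2'
  have hinv1 : a₁ * (2*(a-1)*(s-(a+2))) = 1 := by
    rw [ha₁]; linear_combination (1/4) * hs2'
  have hq2 : (a₂+1)/a₂ = (a+v)^2 := by
    rw [div_eq_iff ha₂pos.ne']
    linear_combination (-1)*hinv2 - a₂*hv2 - 2*a₂*hrel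
  have hq1 : (a₁-1)/a₁ = (a-v)^2 := by
    rw [div_eq_iff ha₁pos.ne']
    linear_combination hinv1 - a₁*hv2 + 2*a₁*hrel
  have hkey2 : Real.sqrt ((a₂+1)/a₂) = a + v := by
    rw [hq2, Real.sqrt_sq (by linarith)]
  have hkey1 : Real.sqrt ((a₁-1)/a₁) = |a - v| := by
    rw [hq1, Real.sqrt_sq_eq_abs]
  have hsum : a₁ + a₂ = s/4 := by rw [ha₁, ha₂]; ring
  have hA : A₁ = 16*(a-1) - (8*a/s) * ((a+v) - |a-v|) := by
    rw [hA₁, hkey2, hkey1, hsum]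
    rw [div_div_eq_mul_div]
    ring_nf
  by_cases hle : a ≤ 3/2
  · have hva : v ≤ a := by
      have h5 := Real.sqrt_le_sqrt (show a^2+2*a-3 ≤ a^2 by linarith)
      rw [Real.sqrt_sq (by linarith : (0:ℝ) ≤ a)] at h5
      calc v = Real.sqrt (a^2+2*a-3) := hvdef
        _ ≤ a := h5
    have habs : |a - v| = a - v := abs_of_nonneg (by linarith)
    have hA0 : A₁ = 0 := by
      rw [hA, habs]
      have : (8*a/s) * ((a+v) - (a-v)) = 16*(a-1) := by
        field_simp [hspos.ne']
        linear_combination 16 * hrel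
      rw [this]; ring
    refine ⟨fun _ => hA0, fun h => absurd h (by linarith), by rw [hA0]⟩
  · push_neg at hle
    have hva : a ≤ v := by
      have h5 := Real.sqrt_le_sqrt (show a^2 ≤ a^2+2*a-3 by linarith)
      rw [Real.sqrt_sq (by linarith : (0:ℝ) ≤ a)] at h5
      calc a ≤ Real.sqrt (a^2+2*a-3) := h5
        _ = v := hvdef.symm
    have hvpos : 0 < v := by linarith
    have habs : |a - v| = v - a := by rw [abs_of_nonpos (by linarith)]; ring
    have hAe : A₁ = 16*(a-1)*(1 - a/v) := by
      rw [hA, habs]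
      field_simp [hspos.ne', hvpos.ne']
      linear_combination (-16*a) * hrel
    have hnn : 0 ≤ A₁ := by
      rw [hAe]
      have : a/v ≤ 1 := (div_le_one hvpos).mpr hva
      have h1 : 0 ≤ 1 - a/v := by linarith
      positivity
    exact ⟨fun h => absurd h (by linarith), fun _ => hAe, hnn⟩
end

section
/- For every real a ∈ (1,2], A₂ = a₂·A₁. -/
theorem stmt_11 (a : ℝ) (ha : a ∈ Set.Ioc (1:ℝ) 2)
    (a₁ a₂ A₁ A₂ : ℝ)
    (ha₁ : a₁ = (Real.sqrt ((a+2)^2 + 4/(a-1)) + a + 2)/8)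
    (ha₂ : a₂ = (Real.sqrt ((a+2)^2 + 4/(a-1)) - (a+2))/8)
    (hA₁ : A₁ = 16*(a-1) - (2*a/(a₁+a₂)) * (Real.sqrt ((a₂+1)/a₂) - Real.sqrt ((a₁-1)/a₁)))
    (hA₂ : A₂ = (2*a/(a₁+a₂)) * (a₂ * Real.sqrt ((a₁-1)/a₁) + a₁ * Real.sqrt ((a₂+1)/a₂))
        - 2*(2*a^2 + a - 2)) :
    A₂ = a₂ * A₁ := by
  obtain ⟨ha1, ha2⟩ := ha
  set s := Real.sqrt ((a+2)^2 + 4/(a-1)) with hsdef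
  have ha1' : (0:ℝ) < a - 1 := by linarith
  have hs2 : s^2 = (a+2)^2 + 4/(a-1) := Real.sq_sqrt (by positivity)
  have hsgt : a + 2 < s := by
    have hs0 : 0 ≤ s := Real.sqrt_nonneg _
    nlinarith [div_pos (by norm_num : (0:ℝ) < 4) ha1']
  have ha₂pos : 0 < a₂ := by rw [ha₂]; linarith
  have hapos : (0:ℝ) < a := by linarith
  have hs2' : s^2*(a-1) = (a+2)^2*(a-1) + 4 := by
    rw [hs2]; field_simp
  have hkey : Real.sqrt ((a₂+1)/a₂) = (a^2 + (a-1)*s)/a := by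
    have hmul : (a₂+1)*a^2 = a₂*(a^2+(a-1)*s)^2 := by
      rw [ha₂]; linear_combination (((1-a)*s - a^2 + a - 2)/8) * hs2'
    have h1 : (a₂+1)/a₂ = ((a^2 + (a-1)*s)/a)^2 := by
      rw [div_pow, div_eq_div_iff ha₂pos.ne' (by positivity)]
      linear_combination hmul
    rw [h1, Real.sqrt_sq (by positivity)]
  have hsum : a₁ + a₂ = s/4 := by rw [ha₁, ha₂]; ring
  have hspos : 0 < s := by linarith
  rw [hA₁, hA₂, hkey, hsum, ha₁, ha₂]
  field_simp
  ring
end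

section
/- For every real α ∈ (-1,1] with α ≠ 0, ∫₀¹ √(1-x²)/(1-αx²) dx = (π/2)·(1 - √(1-α))/α. -/
open Real Set MeasureTheory intervalIntegral

lemma aux_integrable_inv_sqrt :
    IntervalIntegrable (fun x : ℝ => 1 / Real.sqrt (1 - x^2)) volume 0 1 := by
  have hdom : IntervalIntegrable (fun x : ℝ => (1 - x) ^ (-(1/2) : ℝ)) volume 0 1 := by
    have := (intervalIntegrable_rpow' (a := (0:ℝ)) (b := 1)
      (r := -(1/2)) (by norm_num)).comp_sub_left 1
    simpa using this.symm
  apply hdom.mono_fun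
  · exact (measurable_const.div
      ((Real.continuous_sqrt.comp (by continuity)).measurable)).aestronglyMeasurable
  · filter_upwards [ae_restrict_mem measurableSet_uIoc] with x hx
    rw [Set.uIoc_of_le (by norm_num : (0:ℝ) ≤ 1)] at hx
    obtain ⟨hx0, hx1⟩ := hx
    have h1 : (0:ℝ) ≤ 1 - x := by linarith
    have h2 : 1 - x ≤ 1 - x^2 := by nlinarith
    have hs : Real.sqrt (1 - x) ≤ Real.sqrt (1 - x^2) := Real.sqrt_le_sqrt h2
    have key : (1-x) ^ (-(1/2):ℝ) = 1 / Real.sqrt (1-x) := by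
      rw [Real.rpow_neg h1, ← Real.sqrt_eq_rpow, one_div]
    simp only [norm_div, norm_one, Real.norm_eq_abs, key,
      abs_of_nonneg (Real.sqrt_nonneg _)]
    rcases eq_or_lt_of_le (Real.sqrt_nonneg (1 - x^2)) with h | h
    · simp [← h]
    · have hx2 : 0 < 1 - x^2 := Real.sqrt_pos.mp h
      have hp : 0 < Real.sqrt (1-x) := Real.sqrt_pos.mpr (by nlinarith)
      exact one_div_le_one_div_of_le hp hs

lemma aux_int_one : ∫ x in (0:ℝ)..1, 1 / Real.sqrt (1 - x^2) = π/2 := by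
  have h := intervalIntegral.integral_eq_sub_of_hasDeriv_right_of_le (a := 0) (b := 1)
    (f := Real.arcsin) (f' := fun x => 1 / Real.sqrt (1 - x^2)) (by norm_num)
    Real.continuous_arcsin.continuousOn
    (fun x hx => (Real.hasDerivAt_arcsin (by nlinarith [hx.1] : x ≠ -1)
      (ne_of_lt hx.2)).hasDerivWithinAt)
    aux_integrable_inv_sqrt
  simpa [Real.arcsin_one, Real.arcsin_zero] using h

open Real in
theorem stmt_12 (α : ℝ) (hα : α ∈ Set.Ioc (-1:ℝ) 1) (hα0 : α ≠ 0) :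
    ∫ x in (0:ℝ)..1, Real.sqrt (1 - x^2) / (1 - α*x^2) =
      (π/2) * (1 - Real.sqrt (1 - α)) / α := by
  obtain ⟨hαm, hα1⟩ := hα
  rcases eq_or_lt_of_le hα1 with h1 | h1
  · subst h1
    have hcg : ∀ x : ℝ, Real.sqrt (1 - x^2) / (1 - 1*x^2) = 1 / Real.sqrt (1 - x^2) := by
      intro x; rw [one_mul]; exact Real.sqrt_div_self'
    rw [intervalIntegral.integral_congr (fun x _ => hcg x), aux_int_one]
    norm_num
  · -- α < 1
    have hc : 0 < Real.sqrt (1-α) := Real.sqrt_pos.mpr (by linarith)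
    have hc2 : Real.sqrt (1-α)^2 = 1-α := Real.sq_sqrt (by linarith)
    have hpos : ∀ x ∈ Set.Icc (0:ℝ) 1, 0 < 1 - α*x^2 := by
      intro x hx
      have hx2 : x^2 ≤ 1 := by nlinarith [hx.1, hx.2]
      rcases le_or_gt α 0 with h | h
      · nlinarith [sq_nonneg x]
      · nlinarith [mul_le_mul_of_nonneg_left hx2 h.le]
    set F : ℝ → ℝ := fun x =>
      (1/α) * Real.arcsin x
        - (Real.sqrt (1-α)/α) * Real.arcsin (Real.sqrt (1-α) * x / Real.sqrt (1 - α*x^2))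
      with hF
    have hcont : ContinuousOn F (Set.Icc 0 1) := by
      apply ContinuousOn.sub
      · exact (Real.continuous_arcsin.const_smul (1/α)).continuousOn
      · apply ContinuousOn.mul continuousOn_const
        apply Real.continuous_arcsin.comp_continuousOn
        exact ContinuousOn.div (by fun_prop) (by fun_prop)
          (fun x hx => (Real.sqrt_pos.mpr (hpos x hx)).ne')
    have hint : IntervalIntegrable (fun x => Real.sqrt (1 - x^2) / (1 - α*x^2)) volume 0 1 := by
      apply ContinuousOn.intervalIntegrable
      rw [Set.uIcc_of_le (by norm_num : (0:ℝ) ≤ 1)]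
      exact ContinuousOn.div (by fun_prop) (by fun_prop) (fun x hx => (hpos x hx).ne')
    have hderiv : ∀ x ∈ Set.Ioo (0:ℝ) 1,
        HasDerivAt F (Real.sqrt (1 - x^2) / (1 - α*x^2)) x := by
      intro x hx
      obtain ⟨hx0, hx1⟩ := hx
      have h2 : 0 < 1 - α*x^2 := hpos x ⟨hx0.le, hx1.le⟩
      have hx2 : 0 < 1 - x^2 := by nlinarith
      have hs : 0 < Real.sqrt (1-α*x^2) := Real.sqrt_pos.mpr h2
      have hs2 : Real.sqrt (1-α*x^2)^2 = 1-α*x^2 := Real.sq_sqrt h2.le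
      have ht : 0 < Real.sqrt (1-x^2) := Real.sqrt_pos.mpr hx2
      have ht2 : Real.sqrt (1-x^2)^2 = 1-x^2 := Real.sq_sqrt hx2.le
      -- derivative of inner quotient
      have hq : HasDerivAt (fun y : ℝ => 1 - α*y^2) (-(α*(2*x))) x := by
        have := ((hasDerivAt_pow 2 x).const_mul α).const_sub 1
        refine this.congr_deriv ?_; symm
        simp
      have hsq : HasDerivAt (fun y : ℝ => Real.sqrt (1 - α*y^2))
          (1/(2*Real.sqrt (1-α*x^2)) * (-(α*(2*x)))) x :=
        (Real.hasDerivAt_sqrt h2.ne').comp x hq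
      have hnum : HasDerivAt (fun y : ℝ => Real.sqrt (1-α) * y) (Real.sqrt (1-α)) x := by
        simpa using (hasDerivAt_id x).const_mul (Real.sqrt (1-α))
      have hu : HasDerivAt (fun y : ℝ => Real.sqrt (1-α) * y / Real.sqrt (1-α*y^2))
          (Real.sqrt (1-α) / Real.sqrt (1-α*x^2)^3) x := by
        have h := hnum.div hsq hs.ne'
        refine h.congr_deriv ?_; symm
        field_simp
        linear_combination -hs2
      -- bounds on u
      have hu2 : (Real.sqrt (1-α)*x/Real.sqrt (1-α*x^2))^2 = (1-α)*x^2/(1-α*x^2) := by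
        rw [div_pow, mul_pow, hc2, hs2]
      have hu0 : 0 ≤ Real.sqrt (1-α)*x/Real.sqrt (1-α*x^2) := by positivity
      have hult : Real.sqrt (1-α)*x/Real.sqrt (1-α*x^2) < 1 := by
        have h' : (Real.sqrt (1-α)*x/Real.sqrt (1-α*x^2))^2 < 1 := by
          rw [hu2, div_lt_one h2]; nlinarith
        nlinarith
      have harc := Real.hasDerivAt_arcsin (by linarith : Real.sqrt (1-α)*x/Real.sqrt (1-α*x^2) ≠ -1)
        (ne_of_lt hult)
      have hcomp := harc.comp x hu
      have hsimp : Real.sqrt (1 - (Real.sqrt (1-α)*x/Real.sqrt (1-α*x^2))^2)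
          = Real.sqrt (1-x^2) / Real.sqrt (1-α*x^2) := by
        rw [hu2]
        have he : 1 - (1-α)*x^2/(1-α*x^2) = (1-x^2)/(1-α*x^2) := by
          field_simp; ring
        rw [he, Real.sqrt_div hx2.le]
      have hd1 : HasDerivAt (fun y => (1/α) * Real.arcsin y) ((1/α) * (1/Real.sqrt (1-x^2))) x :=
        (Real.hasDerivAt_arcsin (by linarith) (ne_of_lt hx1)).const_mul (1/α)
      have hd2 := hcomp.const_mul (Real.sqrt (1-α)/α)
      have hfinal := hd1.sub hd2
      refine hfinal.congr_deriv ?_; symm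
      rw [hsimp, one_div_div,
        show Real.sqrt (1-α*x^2)^3 = Real.sqrt (1-α*x^2) * (1-α*x^2) from by
          rw [pow_succ, hs2]; ring,
        show Real.sqrt (1-α)/α * (Real.sqrt (1-α*x^2)/Real.sqrt (1-x^2) *
          (Real.sqrt (1-α)/(Real.sqrt (1-α*x^2) * (1-α*x^2))))
          = (Real.sqrt (1-α)^2)/(α * Real.sqrt (1-x^2) * (1-α*x^2)) from by
            field_simp, hc2]
      field_simp
      rw [ht2, eq_sub_iff_add_eq, ← add_div, div_eq_one_iff_eq (by rw [mul_comm]; exact h2.ne')]; ring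
    have key := intervalIntegral.integral_eq_sub_of_hasDeriv_right_of_le (a := 0) (b := 1)
      (f := F) (by norm_num) hcont (fun x hx => (hderiv x hx).hasDerivWithinAt) hint
    rw [key, hF]
    have hs1 : Real.sqrt (1 - α*1^2) = Real.sqrt (1-α) := by norm_num
    simp only [hs1, one_pow, mul_one, mul_zero, zero_div, Real.arcsin_zero,
      Real.arcsin_one]
    rw [div_self hc.ne', Real.arcsin_one]
    field_simp
    ring
end

section
/- For every real α > 0, ∫₀¹ √(1-x²)/(α + x²) dx = (π/2)·(√((1+α)/α) - 1). -/
open Real in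
theorem stmt_13 (α : ℝ) (hα : 0 < α) :
    ∫ x in (0:ℝ)..1, Real.sqrt (1 - x^2) / (α + x^2) =
      (π/2) * (Real.sqrt ((1+α)/α) - 1) := by
  set k : ℝ := Real.sqrt ((1+α)/α) with hk
  set g : ℝ → ℝ := fun x => x * Real.sqrt (1+α) / Real.sqrt (α + x^2) with hg
  set F : ℝ → ℝ := fun x => -arcsin x + k * arcsin (g x) with hF
  have hα1 : (0:ℝ) < 1 + α := by linarith
  have hd : ∀ x ∈ Set.Ioo (0:ℝ) 1, HasDerivAt F (Real.sqrt (1 - x^2) / (α + x^2)) x := by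
    intro x hx
    obtain ⟨hx0, hx1⟩ := hx
    have hax : (0:ℝ) < α + x^2 := by positivity
    have h1x : (0:ℝ) < 1 - x^2 := by nlinarith
    have hv : HasDerivAt (fun y : ℝ => Real.sqrt (α + y^2)) (x / Real.sqrt (α + x^2)) x := by
      have h1 : HasDerivAt (fun y : ℝ => α + y^2) (2*x) x := by
        simpa using ((hasDerivAt_pow 2 x).const_add α)
      have := (Real.hasDerivAt_sqrt (ne_of_gt hax)).comp x h1
      refine this.congr_deriv ?_
      symm
      field_simp
    have hu : HasDerivAt (fun y : ℝ => y * Real.sqrt (1+α)) (Real.sqrt (1+α)) x := by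
      simpa using (hasDerivAt_id x).mul_const (Real.sqrt (1+α))
    have hgd : HasDerivAt g
        ((Real.sqrt (1+α) * Real.sqrt (α+x^2) - x * Real.sqrt (1+α) * (x / Real.sqrt (α+x^2)))
          / (Real.sqrt (α+x^2))^2) x := hu.div hv (by positivity)
    have hsq : Real.sqrt (α+x^2) ^ 2 = α + x^2 := Real.sq_sqrt hax.le
    have hgx : g x = x * Real.sqrt (1+α) / Real.sqrt (α+x^2) := rfl
    have hgx2 : 1 - (g x)^2 = α * (1-x^2) / (α + x^2) := by
      rw [hgx, div_pow, mul_pow, Real.sq_sqrt hα1.le, hsq]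
      field_simp
      ring
    have hg1 : g x < 1 := by
      nlinarith [Real.sqrt_pos.mpr (show (0:ℝ) < α*(1-x^2)/(α+x^2) by positivity), hgx2,
        Real.sq_sqrt (show (0:ℝ) ≤ α*(1-x^2)/(α+x^2) by positivity),
        Real.sqrt_nonneg (α*(1-x^2)/(α+x^2)), sq_nonneg (g x)]
    have hgneg : -1 < g x := by
      have : 0 < g x := by rw [hgx]; positivity
      linarith
    have harc := (Real.hasDerivAt_arcsin (by linarith) (ne_of_lt hg1)).comp x hgd
    have hA : HasDerivAt (fun y => arcsin y) (1 / Real.sqrt (1 - x^2)) x :=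
      Real.hasDerivAt_arcsin (by linarith) (by linarith)
    have hFd := (hA.neg).add (harc.const_mul k)
    refine hFd.congr_deriv ?_
    have hs1 : Real.sqrt (1 - g x ^2) = Real.sqrt α * Real.sqrt (1-x^2) / Real.sqrt (α+x^2) := by
      rw [hgx2, Real.sqrt_div (by positivity : (0:ℝ) ≤ α*(1-x^2)), Real.sqrt_mul hα.le]
    rw [hs1, hk, Real.sqrt_div hα1.le]
    have ha2 : Real.sqrt α ^ 2 = α := Real.sq_sqrt hα.le
    have hb2 : Real.sqrt (1+α) ^ 2 = 1 + α := Real.sq_sqrt hα1.le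
    have hs2 : Real.sqrt (1-x^2) ^ 2 = 1 - x^2 := Real.sq_sqrt h1x.le
    have ha0 : Real.sqrt α ≠ 0 := by positivity
    have hb0 : Real.sqrt (1+α) ≠ 0 := by positivity
    have hs0 : Real.sqrt (1-x^2) ≠ 0 := by positivity
    have ht0 : Real.sqrt (α+x^2) ≠ 0 := by positivity
    field_simp
    have e1 : √(α+x^2)^3 = (α+x^2)*√(α+x^2) := by rw [pow_succ, hsq]
    have e2 : √(1-x^2)^3 = (1-x^2)*√(1-x^2) := by rw [pow_succ, hs2]
    simp only [e1, e2, ha2, hb2, hs2, hsq]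
    ring
  have hgc : Continuous g := by
    apply Continuous.div
    · exact continuous_id.mul continuous_const
    · exact Real.continuous_sqrt.comp (by continuity)
    · intro x; positivity
  have hcont : ContinuousOn F (Set.Icc 0 1) :=
    (Real.continuous_arcsin.neg.add (continuous_const.mul
      (Real.continuous_arcsin.comp hgc))).continuousOn
  have hint : IntervalIntegrable (fun x => Real.sqrt (1-x^2)/(α+x^2)) MeasureTheory.volume 0 1 :=
    ((Real.continuous_sqrt.comp (by continuity)).div (by continuity)
      (fun x => by positivity)).intervalIntegrable _ _
  rw [intervalIntegral.integral_eq_sub_of_hasDeriv_right_of_le zero_le_one hcont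
    (fun x hx => (hd x hx).hasDerivWithinAt) hint]
  have hg1 : g 1 = 1 := by
    show (1:ℝ) * Real.sqrt (1+α) / Real.sqrt (α + 1^2) = 1
    rw [one_mul, one_pow, add_comm α 1]
    exact div_self (by positivity)
  have hg0 : g 0 = 0 := by
    show (0:ℝ) * Real.sqrt (1+α) / Real.sqrt (α + 0^2) = 0
    simp
  show F 1 - F 0 = (π/2) * (k - 1)
  rw [hF]
  simp only [hg1, hg0, Real.arcsin_one, Real.arcsin_zero]
  ring
end

section
/- For every real t with |t| < 1 and t ≠ 0, ∫₀¹ (1/(1-tx))·√((1-x)/x) dx = π·(1 - √(1-t))/t = π/(1 + √(1-t)). -/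
open Real in
theorem stmt_14 (t : ℝ) (ht : |t| < 1) (ht0 : t ≠ 0) :
    (∫ x in (0:ℝ)..1, (1/(1 - t*x)) * Real.sqrt ((1-x)/x)) =
        π * (1 - Real.sqrt (1 - t)) / t ∧
      π * (1 - Real.sqrt (1 - t)) / t = π / (1 + Real.sqrt (1 - t)) := by
  obtain ⟨ht1, ht2⟩ := abs_lt.mp ht
  have h1t : (0:ℝ) < 1 - t := by linarith
  set c := Real.sqrt (1 - t) with hc
  have hcpos : 0 < c := Real.sqrt_pos.mpr h1t
  have hc2 : c^2 = 1 - t := Real.sq_sqrt h1t.le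
  constructor
  · -- the integral
    set F : ℝ → ℝ := fun x => -(2/t) * Real.arctan (Real.sqrt ((1-x)/x))
        + (2*c/t) * Real.arctan (Real.sqrt ((1-x)/x) / c) with hF
    have hderiv : ∀ x ∈ Set.Ioo (0:ℝ) 1,
        HasDerivAt F ((1/(1 - t*x)) * Real.sqrt ((1-x)/x)) x := by
      intro x hx
      obtain ⟨hx0, hx1⟩ := hx
      have hxne : x ≠ 0 := hx0.ne'
      have hgx : 0 < (1-x)/x := div_pos (by linarith) hx0
      have htx : 0 < 1 - t*x := by nlinarith
      set u := Real.sqrt ((1-x)/x) with hu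
      have hupos : 0 < u := Real.sqrt_pos.mpr hgx
      have hu2 : u^2 = (1-x)/x := Real.sq_sqrt hgx.le
      have hg : HasDerivAt (fun x : ℝ => (1-x)/x) (-(1/x^2)) x := by
        have := ((hasDerivAt_id x).const_sub 1).div (hasDerivAt_id x) hxne
        refine this.congr_deriv (Eq.symm ?_)
        simp only [id]
        field_simp
        ring
      have hsq : HasDerivAt (fun x : ℝ => Real.sqrt ((1-x)/x)) (-(1/x^2) / (2*u)) x :=
        hg.sqrt hgx.ne'
      have h1 : HasDerivAt (fun x : ℝ => Real.arctan (Real.sqrt ((1-x)/x)))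
          (1/(1+u^2) * (-(1/x^2) / (2*u))) x := by
        have := (Real.hasDerivAt_arctan u).comp x hsq
        exact this
      have hsqc : HasDerivAt (fun x : ℝ => Real.sqrt ((1-x)/x) / c)
          ((-(1/x^2) / (2*u)) / c) x := hsq.div_const c
      have h2 : HasDerivAt (fun x : ℝ => Real.arctan (Real.sqrt ((1-x)/x) / c))
          (1/(1+(u/c)^2) * ((-(1/x^2) / (2*u)) / c)) x := by
        have := (Real.hasDerivAt_arctan (u/c)).comp x hsqc
        exact this
      have hsum := (h1.const_mul (-(2/t))).add (h2.const_mul (2*c/t))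
      refine hsum.congr_deriv (Eq.symm ?_)
      have e1 : 1 + u^2 = 1/x := by rw [hu2]; field_simp; ring
      have e2 : 1 + (u/c)^2 = (1 - t*x)/((1-t)*x) := by
        rw [div_pow, hu2, hc2]
        field_simp
        ring
      rw [e1, e2]
      have hux' : x * (u*u) = 1 - x := by
        rw [← sq, hu2]; field_simp
      field_simp
      linear_combination t * hux'
    have hmeas : Measurable (fun x : ℝ => (1/(1 - t*x)) * Real.sqrt ((1-x)/x)) := by
      apply Measurable.mul
      · exact measurable_const.div (measurable_const.sub (measurable_const.mul measurable_id))
      · exact ((measurable_const.sub measurable_id).div measurable_id).sqrt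
    have hint : IntervalIntegrable (fun x => (1/(1 - t*x)) * Real.sqrt ((1-x)/x))
        MeasureTheory.volume 0 1 := by
      rw [intervalIntegrable_iff_integrableOn_Ioc_of_le zero_le_one]
      have hg : MeasureTheory.IntegrableOn (fun x : ℝ => (1/(1-|t|)) * x ^ (-(1/2) : ℝ))
          (Set.Ioc 0 1) MeasureTheory.volume := by
        rw [← intervalIntegrable_iff_integrableOn_Ioc_of_le zero_le_one]
        exact (intervalIntegral.intervalIntegrable_rpow' (by norm_num)).const_mul _
      refine hg.mono' hmeas.aestronglyMeasurable ?_
      filter_upwards [MeasureTheory.ae_restrict_mem measurableSet_Ioc] with x hx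
      obtain ⟨hx0, hx1⟩ := hx
      have habs : 0 ≤ |t| := abs_nonneg t
      have htx : 0 < 1 - |t| := by linarith
      have htx2 : 1 - |t| ≤ 1 - t*x := by nlinarith [neg_abs_le t, le_abs_self t]
      have hs : Real.sqrt ((1-x)/x) ≤ Real.sqrt (1/x) := by
        apply Real.sqrt_le_sqrt
        gcongr
        linarith
      have hrw : (x:ℝ) ^ (-(1/2) : ℝ) = Real.sqrt (1/x) := by
        rw [Real.rpow_neg hx0.le, ← Real.sqrt_eq_rpow, ← Real.sqrt_inv, one_div]
      rw [Real.norm_eq_abs, abs_mul, abs_of_nonneg (Real.sqrt_nonneg _),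
        abs_of_nonneg (le_of_lt (div_pos one_pos (by linarith))), hrw]
      apply mul_le_mul _ hs (Real.sqrt_nonneg _) (by positivity)
      rw [div_le_div_iff₀ (by linarith) htx]
      nlinarith
    have hsqrt_top : Filter.Tendsto Real.sqrt Filter.atTop Filter.atTop := by
      have h := tendsto_rpow_atTop (by norm_num : (0:ℝ) < 1/2)
      apply h.congr'
      filter_upwards [Filter.eventually_ge_atTop (0:ℝ)] with y hy
      rw [Real.sqrt_eq_rpow]
    have hu : Filter.Tendsto (fun x : ℝ => Real.sqrt ((1-x)/x))
        (nhdsWithin 0 (Set.Ioi 0)) Filter.atTop := by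
      apply hsqrt_top.comp
      have h0 : Filter.Tendsto (fun x : ℝ => x⁻¹ - 1) (nhdsWithin 0 (Set.Ioi 0))
          Filter.atTop := Filter.tendsto_atTop_add_const_right _ (-1) tendsto_inv_nhdsGT_zero
      apply h0.congr'
      filter_upwards [self_mem_nhdsWithin] with x (hx : 0 < x)
      field_simp
    have ha : Filter.Tendsto F (nhdsWithin 0 (Set.Ioi 0))
        (nhds (-(2/t) * (π/2) + (2*c/t) * (π/2))) := by
      have h1 : Filter.Tendsto (fun x : ℝ => Real.arctan (Real.sqrt ((1-x)/x)))
          (nhdsWithin 0 (Set.Ioi 0)) (nhds (π/2)) :=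
        (tendsto_nhds_of_tendsto_nhdsWithin Real.tendsto_arctan_atTop).comp hu
      have h2 : Filter.Tendsto (fun x : ℝ => Real.arctan (Real.sqrt ((1-x)/x) / c))
          (nhdsWithin 0 (Set.Ioi 0)) (nhds (π/2)) :=
        (tendsto_nhds_of_tendsto_nhdsWithin Real.tendsto_arctan_atTop).comp
          (hu.atTop_div_const hcpos)
      exact (h1.const_mul (-(2/t))).add (h2.const_mul (2*c/t))
    have hb : Filter.Tendsto F (nhdsWithin 1 (Set.Iio 1)) (nhds 0) := by
      have hq : ContinuousAt (fun x : ℝ => (1-x)/x) 1 :=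
        ContinuousAt.div (continuousAt_const.sub continuousAt_id) continuousAt_id one_ne_zero
      have hs : ContinuousAt (fun x : ℝ => Real.sqrt ((1-x)/x)) 1 :=
        Real.continuous_sqrt.continuousAt.comp hq
      have hcont : ContinuousAt F 1 :=
        (continuousAt_const.mul (Real.continuous_arctan.continuousAt.comp hs)).add
          (continuousAt_const.mul (Real.continuous_arctan.continuousAt.comp (hs.div_const c)))
      have hF1 : F 1 = 0 := by simp [hF]
      rw [← hF1]
      exact hcont.tendsto.mono_left nhdsWithin_le_nhds
    have key := intervalIntegral.integral_eq_sub_of_hasDerivAt_of_tendsto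
      (by norm_num : (0:ℝ) < 1) hderiv hint ha hb
    rw [key]
    field_simp
    ring
  · rw [div_eq_div_iff ht0 (by positivity)]
    linear_combination (-π) * hc2
end

section
/- For every real b ≥ 1, ∫₀¹ (1/(b - x))·√((1-x)/x) dx = π·(1 - √(1 - 1/b)). -/
open Real Filter Set MeasureTheory intervalIntegral Topology

lemma sqrt_tendsto_atTop' : Tendsto Real.sqrt atTop atTop := by
  refine tendsto_atTop_atTop.mpr (fun B => ⟨B^2, fun a ha => ?_⟩)
  calc B ≤ |B| := le_abs_self B
  _ = Real.sqrt (B^2) := (Real.sqrt_sq_eq_abs B).symm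
  _ ≤ Real.sqrt a := Real.sqrt_le_sqrt ha

set_option maxHeartbeats 1000000

open Real in
theorem stmt_15 (b : ℝ) (hb : 1 ≤ b) :
    ∫ x in (0:ℝ)..1, (1/(b - x)) * Real.sqrt ((1-x)/x) =
      π * (1 - Real.sqrt (1 - 1/b)) := by
  have hb0 : (0:ℝ) < b := lt_of_lt_of_le one_pos hb
  set c : ℝ := Real.sqrt (1 - 1/b) with hcdef
  have hc0 : 0 ≤ c := Real.sqrt_nonneg _
  have hb1 : (0:ℝ) ≤ 1 - 1/b := by
    have : 1/b ≤ 1 := by rw [div_le_one hb0]; exact hb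
    linarith
  have hc2 : c^2 = 1 - 1/b := Real.sq_sqrt hb1
  set t : ℝ → ℝ := fun x => Real.sqrt ((1-x)/x) with htdef
  set F : ℝ → ℝ := fun x => -2 * arctan (t x) + 2*c*arctan (t x / c) with hF
  have key : ∫ x in (0:ℝ)..1, (1/(b - x)) * Real.sqrt ((1-x)/x)
      = 0 - (-(π * (1 - c))) := by
    apply intervalIntegral.integral_eq_sub_of_hasDerivAt_of_tendsto (f := F) one_pos
    · -- derivative
      intro x hx
      obtain ⟨hx0, hx1⟩ := hx
      have hbx : 0 < b - x := by linarith
      have hu : 0 < (1-x)/x := div_pos (by linarith) hx0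
      have ht : 0 < t x := Real.sqrt_pos.mpr hu
      have ht2 : t x ^ 2 = (1-x)/x := Real.sq_sqrt hu.le
      -- derivative of inner function
      have hu' : HasDerivAt (fun y : ℝ => (1-y)/y) (-(x^2)⁻¹) x := by
        have h1 : HasDerivAt (fun y : ℝ => y⁻¹ - 1)
            (-(x^2)⁻¹) x := (hasDerivAt_inv hx0.ne').sub_const 1
        apply h1.congr_of_eventuallyEq
        filter_upwards [Ioo_mem_nhds hx0 hx1] with y hy
        have hy0 : y ≠ 0 := hy.1.ne'
        field_simp
      have ht' : HasDerivAt t ((-(x^2)⁻¹) / (2 * t x)) x := hu'.sqrt hu.ne'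
      set d : ℝ := (-(x^2)⁻¹) / (2 * t x) with hd
      have h1 : HasDerivAt (fun y => -2 * arctan (t y))
          (-2 * (1/(1 + t x^2) * d)) x :=
        ((Real.hasDerivAt_arctan (t x)).comp x ht').const_mul (-2)
      have h2 : HasDerivAt (fun y => 2*c*arctan (t y / c))
          (2*c^2/(c^2 + t x^2) * d) x := by
        rcases eq_or_lt_of_le hc0 with h | h
        · have : (fun y => 2*c*arctan (t y / c)) = fun _ => (0:ℝ) := by
            funext y; rw [← h]; ring
          rw [this, ← h]
          simpa using (hasDerivAt_const x (0:ℝ))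
        · have := ((Real.hasDerivAt_arctan (t x / c)).comp x
            (ht'.div_const c)).const_mul (2*c)
          refine this.congr_deriv (Eq.symm ?_)
          have hc2' : (c:ℝ) ≠ 0 := h.ne'
          field_simp
      have := h1.add h2
      refine this.congr_deriv (Eq.symm ?_)
      have e1 : 1 + t x^2 = 1/x := by rw [ht2]; field_simp; ring
      have e2 : c^2 + t x^2 = (b-x)/(b*x) := by
        rw [hc2, ht2]; field_simp; ring
      rw [e1, e2, hd, hc2]
      have hsq : Real.sqrt ((1-x)/x) = t x := rfl
      rw [hsq]
      have ht2' : t x^2 * x = 1 - x := by rw [ht2]; field_simp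
      field_simp
      linear_combination ht2'
    · -- integrability
      set h : ℝ → ℝ := fun x => Real.sqrt 2 * x ^ (-(1/2) : ℝ)
        + Real.sqrt 2 * (1-x) ^ (-(1/2) : ℝ) with hh
      have hi1 : IntervalIntegrable (fun x : ℝ => x ^ (-(1/2) : ℝ)) volume 0 1 :=
        intervalIntegral.intervalIntegrable_rpow' (by norm_num)
      have hi2 : IntervalIntegrable (fun x : ℝ => (1-x) ^ (-(1/2) : ℝ)) volume 0 1 := by
        have := hi1.comp_sub_left 1
        simpa using this.symm
      have hint_h : IntervalIntegrable h volume 0 1 :=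
        (hi1.const_mul _).add (hi2.const_mul _)
      apply hint_h.mono_fun'
      · apply Measurable.aestronglyMeasurable
        apply Measurable.mul
        · exact measurable_const.div (measurable_const.sub measurable_id)
        · exact Real.continuous_sqrt.measurable.comp
            ((measurable_const.sub measurable_id).div measurable_id)
      · rw [Set.uIoc_of_le (zero_le_one)]
        filter_upwards [ae_restrict_mem measurableSet_Ioc] with x hx
        obtain ⟨hx0, hx1⟩ := hx
        set s : ℝ := Real.sqrt x with hs
        set u : ℝ := Real.sqrt (1-x) with huu
        have hs0 : 0 < s := Real.sqrt_pos.mpr hx0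
        have hu0 : 0 ≤ u := Real.sqrt_nonneg _
        have hs2 : s^2 = x := Real.sq_sqrt hx0.le
        have hu2 : u^2 = 1 - x := Real.sq_sqrt (by linarith)
        have hx2 : x ^ (-(1/2) : ℝ) = s⁻¹ := by
          rw [Real.rpow_neg hx0.le, ← Real.sqrt_eq_rpow]
        have hx2' : (1-x) ^ (-(1/2) : ℝ) = u⁻¹ := by
          rw [Real.rpow_neg (by linarith), ← Real.sqrt_eq_rpow]
        have hsqrt2 : (1:ℝ) ≤ Real.sqrt 2 := by
          rw [show (1:ℝ) = Real.sqrt 1 from (Real.sqrt_one).symm]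
          exact Real.sqrt_le_sqrt (by norm_num)
        have hsplit : Real.sqrt ((1-x)/x) = u / s := Real.sqrt_div (by linarith) x
        have hfx : 0 ≤ 1/(b-x) * Real.sqrt ((1-x)/x) := by
          apply mul_nonneg _ (Real.sqrt_nonneg _)
          apply one_div_nonneg.mpr; linarith
        rw [Real.norm_eq_abs, abs_of_nonneg hfx]
        show 1/(b-x) * Real.sqrt ((1-x)/x)
          ≤ Real.sqrt 2 * x ^ (-(1/2) : ℝ) + Real.sqrt 2 * (1-x) ^ (-(1/2) : ℝ)
        rcases eq_or_lt_of_le hx1 with h1 | h1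
        · -- x = 1
          have : Real.sqrt ((1-x)/x) = 0 := by rw [← h1]; simp
          rw [this, mul_zero, hx2, hx2']
          have : (0:ℝ) ≤ u⁻¹ := inv_nonneg.mpr hu0
          positivity
        · -- x < 1
          have hu0' : 0 < u := Real.sqrt_pos.mpr (by linarith)
          have hbx : 0 < b - x := by linarith
          have step1 : 1/(b-x) * Real.sqrt ((1-x)/x) ≤ 1/(s*u) := by
            rw [hsplit]
            rw [div_mul_div_comm, one_mul, div_le_div_iff₀ (by positivity) (by positivity)]
            nlinarith [hs2, hu2, hs0, hu0']
          refine le_trans step1 ?_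
          rw [hx2, hx2']
          have hsum : 1 ≤ s + u := by nlinarith [mul_nonneg hs0.le hu0]
          rw [div_le_iff₀ (by positivity)]
          have e : (Real.sqrt 2 * s⁻¹ + Real.sqrt 2 * u⁻¹) * (s*u)
              = Real.sqrt 2 * (u + s) := by field_simp
          rw [e]
          nlinarith [hsum, hsqrt2]
    · -- limit at 0+
      have hinner : Tendsto (fun x : ℝ => (1-x)/x) (𝓝[>] 0) atTop := by
        have h1 : Tendsto (fun x : ℝ => (1-x)) (𝓝[>] 0) (𝓝 1) := by
          have h0 : Tendsto (fun x : ℝ => 1 - x) (𝓝 0) (𝓝 (1 - 0)) :=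
            (continuous_const.sub continuous_id).tendsto 0
          simpa using h0.mono_left nhdsWithin_le_nhds
        have := h1.pos_mul_atTop one_pos tendsto_inv_nhdsGT_zero
        simpa [div_eq_mul_inv] using this
      have htop : Tendsto t (𝓝[>] 0) atTop := sqrt_tendsto_atTop'.comp hinner
      have hA : Tendsto (fun x => arctan (t x)) (𝓝[>] 0) (𝓝 (π/2)) :=
        (tendsto_nhds_of_tendsto_nhdsWithin Real.tendsto_arctan_atTop).comp htop
      rcases eq_or_lt_of_le hc0 with h | h
      · have : F = fun x => -2 * arctan (t x) := by
          funext y; rw [hF, ← h]; ring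
        rw [this, ← h]
        have := hA.const_mul (-2)
        convert this using 2
        ring
      · have hB : Tendsto (fun x => arctan (t x / c)) (𝓝[>] 0) (𝓝 (π/2)) :=
          (tendsto_nhds_of_tendsto_nhdsWithin Real.tendsto_arctan_atTop).comp
            (htop.atTop_div_const h)
        have := (hA.const_mul (-2)).add (hB.const_mul (2*c))
        rw [hF]
        convert this using 2
        ring
    · -- limit at 1-
      have hct : ContinuousAt t 1 := by
        apply Real.continuous_sqrt.continuousAt.comp
        exact (continuous_const.sub continuous_id).continuousAt.div
          continuous_id.continuousAt (by norm_num)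
      have hcF : ContinuousAt F 1 := by
        rw [hF]
        exact ((Real.continuous_arctan.continuousAt.comp hct).const_mul (-2)).add
          (((Real.continuous_arctan.continuousAt.comp (hct.div_const c))).const_mul (2*c))
      have hF1 : F 1 = 0 := by
        rw [hF]
        simp [htdef]
      have := hcF.tendsto.mono_left (nhdsWithin_le_nhds (s := Iio (1:ℝ)))
      rw [hF1] at this
      exact this
  rw [key]; ring
end

section
/- For every real a ∈ (0,1), ∫₀¹ √(x(1-x)) / (x² - ((a+2)/4)x - 1/(16(a-1))) dx = 2π(1/a - 1). -/
open Real
set_option maxHeartbeats 1000000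


lemma arcsin_div_sqrt_eq_arctan (p q : ℝ) (hq : 0 < q) :
    arcsin (p / Real.sqrt (p^2 + q^2)) = arctan (p / q) := by
  rw [Real.arctan_eq_arcsin]
  congr 1
  have h1 : Real.sqrt (1 + (p/q)^2) = Real.sqrt (p^2+q^2) / q := by
    rw [eq_div_iff hq.ne', ← Real.sqrt_sq hq.le, ← Real.sqrt_mul (by positivity)]
    congr 1
    field_simp
    simp only [Real.sqrt_sq hq.le]
    ring
  rw [h1]
  field_simp

noncomputable def FF (a b : ℝ) (x : ℝ) : ℝ :=
  -2 * Real.arcsin (Real.sqrt x)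
  + (-(1-a)/b) * (Real.log (2*(1-a)*x+1 + b*(Real.sqrt x*Real.sqrt (1-x)))
                - Real.log (2*(1-a)*x+1 - b*(Real.sqrt x*Real.sqrt (1-x))))
  + ((2-a)/a) * (Real.arcsin ((2*(3-2*a)*Real.sqrt x + b*Real.sqrt (1-x)) /
        Real.sqrt ((2*(3-2*a)*Real.sqrt x + b*Real.sqrt (1-x))^2 + (2*a*Real.sqrt (1-x))^2))
     + Real.arcsin ((2*(3-2*a)*Real.sqrt x - b*Real.sqrt (1-x)) /
        Real.sqrt ((2*(3-2*a)*Real.sqrt x - b*Real.sqrt (1-x))^2 + (2*a*Real.sqrt (1-x))^2)))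

lemma FF_eq_G (a b : ℝ) (ha : 0 < a) (x : ℝ) (hx : x ∈ Set.Ioo (0:ℝ) 1) :
    FF a b x = -2 * Real.arctan (Real.sqrt x / Real.sqrt (1-x))
      + (-(1-a)/b) * (Real.log (2*(1-a)*x+1 + b*(Real.sqrt x*Real.sqrt (1-x)))
                    - Real.log (2*(1-a)*x+1 - b*(Real.sqrt x*Real.sqrt (1-x))))
      + ((2-a)/a) * (Real.arctan ((2*(3-2*a)*Real.sqrt x + b*Real.sqrt (1-x)) / (2*a*Real.sqrt (1-x)))
                   + Real.arctan ((2*(3-2*a)*Real.sqrt x - b*Real.sqrt (1-x)) / (2*a*Real.sqrt (1-x)))) := by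
  obtain ⟨hx0, hx1⟩ := hx
  have hv : 0 < Real.sqrt (1-x) := Real.sqrt_pos.2 (by linarith)
  have hq : 0 < 2*a*Real.sqrt (1-x) := by positivity
  have e1 : Real.arcsin (Real.sqrt x) = Real.arctan (Real.sqrt x / Real.sqrt (1-x)) := by
    have h1 : (Real.sqrt x)^2 + (Real.sqrt (1-x))^2 = 1 := by
      rw [Real.sq_sqrt hx0.le, Real.sq_sqrt (by linarith : (0:ℝ) ≤ 1-x)]
      ring
    have h := arcsin_div_sqrt_eq_arctan (Real.sqrt x) (Real.sqrt (1-x)) hv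
    rwa [h1, Real.sqrt_one, div_one] at h
  rw [FF, e1,
    arcsin_div_sqrt_eq_arctan (2*(3-2*a)*Real.sqrt x + b*Real.sqrt (1-x)) (2*a*Real.sqrt (1-x)) hq,
    arcsin_div_sqrt_eq_arctan (2*(3-2*a)*Real.sqrt x - b*Real.sqrt (1-x)) (2*a*Real.sqrt (1-x)) hq]
lemma hasDerivAt_of_eq_deriv {f : ℝ → ℝ} {a b x : ℝ} (h : HasDerivAt f b x) (e : a = b) :
    HasDerivAt f a x := e ▸ h

lemma hasDerivAt_arctan_div (p q : ℝ → ℝ) (p' q' x : ℝ)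
    (hp : HasDerivAt p p' x) (hq : HasDerivAt q q' x) (hq0 : q x ≠ 0) :
    HasDerivAt (fun y => arctan (p y / q y))
      ((p' * q x - p x * q') / ((p x)^2 + (q x)^2)) x := by
  have h := (Real.hasDerivAt_arctan (p x / q x)).comp x (hp.div hq hq0)
  refine hasDerivAt_of_eq_deriv h ?_
  have h2 : (p x)^2 + (q x)^2 ≠ 0 := by
    intro h0
    apply hq0
    nlinarith [sq_nonneg (p x), sq_nonneg (q x)]
  field_simp
  ring

lemma hasDerivAt_log_comp (f : ℝ → ℝ) (f' x : ℝ) (hf : HasDerivAt f f' x) (h0 : f x ≠ 0) :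
    HasDerivAt (fun y => Real.log (f y)) (f' / f x) x := by
  have := (Real.hasDerivAt_log h0).comp x hf
  refine hasDerivAt_of_eq_deriv this ?_
  ring

set_option maxHeartbeats 2000000 in
lemma hasDerivAt_G (a b x : ℝ) (ha : 0 < a) (ha1 : a < 1) (hb : 0 < b)
    (hb2 : b^2 = 4*(3+a)*(1-a)) (hx : 0 < x) (hx1 : x < 1) :
    HasDerivAt (fun y => -2 * Real.arctan (Real.sqrt y / Real.sqrt (1-y))
      + (-(1-a)/b) * (Real.log (2*(1-a)*y+1 + b*(Real.sqrt y*Real.sqrt (1-y)))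
                    - Real.log (2*(1-a)*y+1 - b*(Real.sqrt y*Real.sqrt (1-y))))
      + ((2-a)/a) * (Real.arctan ((2*(3-2*a)*Real.sqrt y + b*Real.sqrt (1-y)) / (2*a*Real.sqrt (1-y)))
                   + Real.arctan ((2*(3-2*a)*Real.sqrt y - b*Real.sqrt (1-y)) / (2*a*Real.sqrt (1-y)))))
      (Real.sqrt (x*(1-x)) / (x^2 - ((a+2)/4)*x - 1/(16*(a-1)))) x := by
  have hx1' : (0:ℝ) < 1 - x := by linarith
  have ha1' : a - 1 ≠ 0 := by linarith
  have ha1'' : (1:ℝ) - a ≠ 0 := by linarith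
  set r : ℝ := Real.sqrt x with hrdef
  set v : ℝ := Real.sqrt (1-x) with hvdef
  have hr : 0 < r := Real.sqrt_pos.2 hx
  have hv : 0 < v := Real.sqrt_pos.2 hx1'
  have hr2 : r^2 = x := Real.sq_sqrt hx.le
  have hv2 : v^2 = 1 - x := Real.sq_sqrt hx1'.le
  have h1 : r^2 + v^2 = 1 := by rw [hr2, hv2]; ring
  have hrv2 : (r*v)^2 = x*(1-x) := by rw [mul_pow, hr2, hv2]
  have hk : (0:ℝ) < 3-2*a := by linarith
  -- basic derivatives
  have hrd : HasDerivAt (fun y => Real.sqrt y) (1/(2*r)) x := by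
    simpa [hrdef] using Real.hasDerivAt_sqrt hx.ne'
  have hvd : HasDerivAt (fun y => Real.sqrt (1-y)) (-(1/(2*v))) x := by
    have h := (Real.hasDerivAt_sqrt hx1'.ne').comp x
      ((hasDerivAt_const x (1:ℝ)).sub (hasDerivAt_id x))
    refine hasDerivAt_of_eq_deriv h ?_
    simp [hvdef]
  have hwd : HasDerivAt (fun y => Real.sqrt y * Real.sqrt (1-y))
      ((1/(2*r))*v + r*(-(1/(2*v)))) x := hrd.mul hvd
  have hcd : HasDerivAt (fun y => 2*(1-a)*y+1) (2*(1-a)) x := by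
    simpa using ((hasDerivAt_id x).const_mul (2*(1-a))).add_const (1:ℝ)
  -- quadratic P
  have hP : 0 < 16*(1-a)*x^2 - 4*(1-a)*(2+a)*x + 1 := by
    nlinarith [sq_nonneg (16*(1-a)*x - 2*(1-a)*(2+a)),
      mul_pos (sub_pos.mpr ha1) (mul_pos (mul_pos ha ha) (show (0:ℝ) < a+3 by linarith))]
  set P : ℝ := 16*(1-a)*x^2 - 4*(1-a)*(2+a)*x + 1 with hPdef
  set c : ℝ := 2*(1-a)*x+1 with hcdef
  have hkey : c^2 - b^2*(r*v)^2 = P := by rw [hb2, hrv2, hcdef, hPdef]; ring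
  have hc : 0 < c := by rw [hcdef]; nlinarith
  have hcp : 0 < c + b*(r*v) := by positivity
  have hcm : 0 < c - b*(r*v) := by nlinarith [mul_pos hb (mul_pos hr hv)]
  have hprod : (c + b*(r*v))*(c - b*(r*v)) = P := by linear_combination hkey
  have hQ : x^2 - ((a+2)/4)*x - 1/(16*(a-1)) = P/(16*(1-a)) := by
    rw [hPdef]
    field_simp
    ring
  -- term 1 : arctan(√y/√(1-y))
  have D1 : HasDerivAt (fun y => Real.arctan (Real.sqrt y / Real.sqrt (1-y)))
      (1/(2*(r*v))) x := by
    have h := hasDerivAt_arctan_div (fun y => Real.sqrt y) (fun y => Real.sqrt (1-y))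
      _ _ x hrd hvd hv.ne'
    convert h using 1
    beta_reduce
    rw [← hrdef, ← hvdef, h1]
    field_simp
    linear_combination ((-1)) * hr2 + ((-1)) * hv2
  -- log terms
  have Lp : HasDerivAt (fun y => Real.log (2*(1-a)*y+1 + b*(Real.sqrt y*Real.sqrt (1-y))))
      ((2*(1-a) + b*((1/(2*r))*v + r*(-(1/(2*v)))))/(c + b*(r*v))) x := by
    have h := hasDerivAt_log_comp (fun y => 2*(1-a)*y+1 + b*(Real.sqrt y*Real.sqrt (1-y)))
      (2*(1-a) + b*((1/(2*r))*v + r*(-(1/(2*v))))) x (hcd.add (hwd.const_mul b)) ?_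
    · convert h using 2
    · beta_reduce
      rw [← hrdef, ← hvdef, ← hcdef]
      exact hcp.ne'
  have Lm : HasDerivAt (fun y => Real.log (2*(1-a)*y+1 - b*(Real.sqrt y*Real.sqrt (1-y))))
      ((2*(1-a) - b*((1/(2*r))*v + r*(-(1/(2*v)))))/(c - b*(r*v))) x := by
    have h := hasDerivAt_log_comp (fun y => 2*(1-a)*y+1 - b*(Real.sqrt y*Real.sqrt (1-y)))
      (2*(1-a) - b*((1/(2*r))*v + r*(-(1/(2*v))))) x (hcd.sub (hwd.const_mul b)) ?_
    · convert h using 2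
    · beta_reduce
      rw [← hrdef, ← hvdef, ← hcdef]
      exact hcm.ne'
  have L : HasDerivAt (fun y => Real.log (2*(1-a)*y+1 + b*(Real.sqrt y*Real.sqrt (1-y)))
                    - Real.log (2*(1-a)*y+1 - b*(Real.sqrt y*Real.sqrt (1-y))))
      (b*(1-2*(2-a)*x)/((r*v)*P)) x := by
    have h := Lp.sub Lm
    refine hasDerivAt_of_eq_deriv h ?_
    rw [div_sub_div _ _ hcp.ne' hcm.ne', hprod]
    rw [div_eq_div_iff (by positivity) hP.ne']
    field_simp
    linear_combination ((-2)*b*v^2 + (2)*b*r^2) * hcdef + ((6)*b + (-4)*a*b + (4)*b*v^2 + (-4)*a*b*v^2) * hr2 + ((4)*b*r^2 + (-4)*a*b*r^2 + (-2)*b) * hv2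
  -- arctan terms
  have Ap : HasDerivAt (fun y => Real.arctan ((2*(3-2*a)*Real.sqrt y + b*Real.sqrt (1-y)) / (2*a*Real.sqrt (1-y))))
      (a/(2*(r*v)*(c + b*(r*v)))) x := by
    have h := hasDerivAt_arctan_div (fun y => 2*(3-2*a)*Real.sqrt y + b*Real.sqrt (1-y))
      (fun y => 2*a*Real.sqrt (1-y))
      ((2*(3-2*a))*(1/(2*r)) + b*(-(1/(2*v)))) ((2*a)*(-(1/(2*v)))) x
      ((hrd.const_mul (2*(3-2*a))).add (hvd.const_mul b)) (hvd.const_mul (2*a)) ?_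
    · convert h using 1
      beta_reduce
      rw [← hrdef, ← hvdef]
      rw [div_eq_div_iff (by positivity) (by positivity)]
      field_simp
      linear_combination ((-12)*v^2 + (8)*a*v^2 + (-12)*r^2 + (8)*a*r^2) * hcdef + ((1)*b^2 + (4)*a^2 + (24)*v^2 + (-40)*a*v^2 + (-12)*b*r*v + (16)*a^2*v^2 + (8)*a*b*r*v + (-12) + (8)*a) * hr2 + ((1)*b^2 + (4)*a^2 + (-12)*b*r*v + (8)*a*b*r*v + (-12) + (8)*a + (-24)*r^2 + (40)*a*r^2 + (-16)*a^2*r^2) * hv2 + ((1) + (-1)*r^2) * hb2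
    · beta_reduce
      rw [← hvdef]
      positivity
  have Am : HasDerivAt (fun y => Real.arctan ((2*(3-2*a)*Real.sqrt y - b*Real.sqrt (1-y)) / (2*a*Real.sqrt (1-y))))
      (a/(2*(r*v)*(c - b*(r*v)))) x := by
    have h := hasDerivAt_arctan_div (fun y => 2*(3-2*a)*Real.sqrt y - b*Real.sqrt (1-y))
      (fun y => 2*a*Real.sqrt (1-y))
      ((2*(3-2*a))*(1/(2*r)) - b*(-(1/(2*v)))) ((2*a)*(-(1/(2*v)))) x
      ((hrd.const_mul (2*(3-2*a))).sub (hvd.const_mul b)) (hvd.const_mul (2*a)) ?_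
    · convert h using 1
      beta_reduce
      rw [← hrdef, ← hvdef]
      rw [div_eq_div_iff (by positivity) (by positivity)]
      field_simp
      linear_combination ((-12)*v^2 + (8)*a*v^2 + (-12)*r^2 + (8)*a*r^2) * hcdef + ((1)*b^2 + (4)*a^2 + (24)*v^2 + (-40)*a*v^2 + (12)*b*r*v + (16)*a^2*v^2 + (-8)*a*b*r*v + (-12) + (8)*a) * hr2 + ((1)*b^2 + (4)*a^2 + (12)*b*r*v + (-8)*a*b*r*v + (-12) + (8)*a + (-24)*r^2 + (40)*a*r^2 + (-16)*a^2*r^2) * hv2 + ((1) + (-1)*r^2) * hb2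
    · beta_reduce
      rw [← hvdef]
      positivity
  have hApAm : a/(2*(r*v)*(c + b*(r*v))) + a/(2*(r*v)*(c - b*(r*v)))
      = a*c/((r*v)*P) := by
    rw [div_add_div _ _ (by positivity) (by positivity),
      div_eq_div_iff (by positivity) (by positivity)]
    linear_combination (0:ℝ) + ((48)*r^2*v^2*a + (48)*r^2*v^2*a*x + (-96)*r^2*v^2*a*x^2 + (-32)*r^2*v^2*a^2 + (-128)*r^2*v^2*a^2*x + (160)*r^2*v^2*a^2*x^2 + (-16)*r^2*v^2*a^3 + (48)*r^2*v^2*a^3*x + (-32)*r^2*v^2*a^3*x^2 + (32)*r^2*v^2*a^4*x + (-32)*r^2*v^2*a^4*x^2 + (48)*r^4*a + (-32)*r^4*a^2 + (-16)*r^4*a^3 + (-4)*r^4*b^2*a + (48)*r^4*v^2*a + (-96)*r^4*v^2*a*x + (-128)*r^4*v^2*a^2 + (160)*r^4*v^2*a^2*x + (48)*r^4*v^2*a^3 + (-32)*r^4*v^2*a^3*x + (32)*r^4*v^2*a^4 + (-32)*r^4*v^2*a^4*x + (-4)*r^4*v^2*b^2*a + (-8)*r^4*v^4*b^2*a + (8)*r^4*v^4*b^2*a^2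 + (48)*r^6*a + (-128)*r^6*a^2 + (48)*r^6*a^3 + (32)*r^6*a^4 + (-4)*r^6*b^2*a + (8)*r^6*b^2*a^2 + (-96)*r^6*v^2*a + (160)*r^6*v^2*a^2 + (-32)*r^6*v^2*a^3 + (-32)*r^6*v^2*a^4 + (-8)*r^6*v^2*b^2*a + (8)*r^6*v^2*b^2*a^2 + (-96)*r^8*a + (160)*r^8*a^2 + (-32)*r^8*a^3 + (-32)*r^8*a^4 + (8)*r^8*b^2*a + (-8)*r^8*b^2*a^2) * hr2 + ((-48)*r^4*a + (32)*r^4*a^2 + (16)*r^4*a^3 + (4)*r^4*b^2*a + (4)*r^4*v^2*b^2*a + (-48)*r^6*a + (128)*r^6*a^2 + (-48)*r^6*a^3 + (-32)*r^6*a^4 + (4)*r^6*b^2*a + (-8)*r^6*b^2*a^2 + (8)*r^6*v^2*b^2*a + (-8)*r^6*v^2*b^2*a^2 + (96)*r^8*a + (-160)*r^8*a^2 + (32)*r^8*a^3 + (32)*r^8*a^4 + (-8)*r^8*b^2*a + (8)*r^8*b^2*a^2) * hv2 + ((4)*r^4*a + (-8)*r^6*a^2 + (-12)*r^8*a + (16)*r^8*a^2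 + (8)*r^10*a + (-8)*r^10*a^2) * hb2 + ((-96)*r^4*a + (64)*r^4*a^2 + (32)*r^4*a^3 + (8)*r^4*b^2*a + (8)*r^4*v^2*b^2*a + (-96)*r^6*a + (256)*r^6*a^2 + (-96)*r^6*a^3 + (-64)*r^6*a^4 + (8)*r^6*b^2*a + (-16)*r^6*b^2*a^2 + (16)*r^6*v^2*b^2*a + (-16)*r^6*v^2*b^2*a^2 + (192)*r^8*a + (-320)*r^8*a^2 + (64)*r^8*a^3 + (64)*r^8*a^4 + (-16)*r^8*b^2*a + (16)*r^8*b^2*a^2) * hr2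
  -- assemble
  have H := ((D1.const_mul (-2:ℝ)).add (L.const_mul (-(1-a)/b))).add
    ((Ap.add Am).const_mul ((2-a)/a))
  refine hasDerivAt_of_eq_deriv H ?_
  rw [Real.sqrt_mul hx.le, ← hrdef, ← hvdef, hQ, hApAm]
  rw [div_div_eq_mul_div]
  field_simp
  linear_combination ((-2) + (1)*a) * hcdef + ((1)) * hPdef + ((16) + (-16)*a + (-16)*x + (16)*a*x) * hr2 + ((16)*r^2 + (-16)*a*r^2) * hv2


-- positivity of log arguments on [0,1]
lemma logarg_pos (a b x : ℝ) (ha : 0 < a) (ha1 : a < 1) (hb : 0 < b)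
    (hb2 : b^2 = 4*(3+a)*(1-a)) (hx : 0 ≤ x) (hx1 : x ≤ 1) :
    0 < 2*(1-a)*x+1 - b*(Real.sqrt x*Real.sqrt (1-x))
    ∧ 0 < 2*(1-a)*x+1 + b*(Real.sqrt x*Real.sqrt (1-x)) := by
  have hs : (Real.sqrt x)^2 = x := Real.sq_sqrt hx
  have ht : (Real.sqrt (1-x))^2 = 1-x := Real.sq_sqrt (by linarith)
  have hs0 : 0 ≤ Real.sqrt x := Real.sqrt_nonneg _
  have ht0 : 0 ≤ Real.sqrt (1-x) := Real.sqrt_nonneg _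
  have hP : 0 < 16*(1-a)*x^2 - 4*(1-a)*(2+a)*x + 1 := by
    nlinarith [sq_nonneg (16*(1-a)*x - 2*(1-a)*(2+a)),
      mul_pos (sub_pos.mpr ha1) (mul_pos (mul_pos ha ha) (show (0:ℝ) < a+3 by linarith))]
  have hc : 0 < 2*(1-a)*x+1 := by nlinarith
  have hkey : (2*(1-a)*x+1)^2 - b^2*(Real.sqrt x*Real.sqrt (1-x))^2
      = 16*(1-a)*x^2 - 4*(1-a)*(2+a)*x + 1 := by
    rw [mul_pow, hs, ht, hb2]
    ring
  have hbst : 0 ≤ b*(Real.sqrt x*Real.sqrt (1-x)) := by positivity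
  constructor
  · nlinarith
  · nlinarith

lemma sqden_pos (a b x : ℝ) (ha : 0 < a) (ha1 : a < 1) (hb : 0 < b) (s : ℝ)
    (hs : s = 1 ∨ s = -1) (hx : 0 ≤ x) (hx1 : x ≤ 1) :
    0 < (2*(3-2*a)*Real.sqrt x + s*(b*Real.sqrt (1-x)))^2 + (2*a*Real.sqrt (1-x))^2 := by
  rcases eq_or_lt_of_le hx1 with h1 | h1
  · subst h1
    have h2 : Real.sqrt (1-(1:ℝ)) = 0 := by norm_num
    rw [h2, Real.sqrt_one]
    nlinarith [sq_nonneg s, sq_nonneg (s*b)]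
  · have hv : 0 < Real.sqrt (1-x) := Real.sqrt_pos.2 (by linarith)
    have : 0 < (2*a*Real.sqrt (1-x))^2 := by positivity
    nlinarith [sq_nonneg (2*(3-2*a)*Real.sqrt x + s*(b*Real.sqrt (1-x)))]

lemma continuousOn_FF (a b : ℝ) (ha : 0 < a) (ha1 : a < 1) (hb : 0 < b)
    (hb2 : b^2 = 4*(3+a)*(1-a)) :
    ContinuousOn (FF a b) (Set.Icc (0:ℝ) 1) := by
  have hsqrt : Continuous (fun x : ℝ => Real.sqrt x) := Real.continuous_sqrt
  have hsqrt1 : Continuous (fun x : ℝ => Real.sqrt (1-x)) :=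
    Real.continuous_sqrt.comp (continuous_const.sub continuous_id)
  have hc1 : Continuous (fun x : ℝ => 2*(1-a)*x+1) := by continuity
  have hw : Continuous (fun x : ℝ => Real.sqrt x * Real.sqrt (1-x)) := hsqrt.mul hsqrt1
  apply ContinuousOn.add
  apply ContinuousOn.add
  · exact (continuous_const.mul (Real.continuous_arcsin.comp hsqrt)).continuousOn
  · apply ContinuousOn.mul continuousOn_const
    apply ContinuousOn.sub
    · apply ContinuousOn.log (hc1.add (continuous_const.mul hw)).continuousOn
      intro x hx
      exact ((logarg_pos a b x ha ha1 hb hb2 hx.1 hx.2).2).ne'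
    · apply ContinuousOn.log (hc1.sub (continuous_const.mul hw)).continuousOn
      intro x hx
      exact ((logarg_pos a b x ha ha1 hb hb2 hx.1 hx.2).1).ne'
  · apply ContinuousOn.mul continuousOn_const
    have hnum1 : Continuous (fun x : ℝ => 2*(3-2*a)*Real.sqrt x + b*Real.sqrt (1-x)) := by
      continuity
    have hnum2 : Continuous (fun x : ℝ => 2*(3-2*a)*Real.sqrt x - b*Real.sqrt (1-x)) := by
      continuity
    have hq : Continuous (fun x : ℝ => 2*a*Real.sqrt (1-x)) := by continuity
    apply ContinuousOn.add
    · apply Real.continuous_arcsin.comp_continuousOn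
      apply ContinuousOn.div hnum1.continuousOn
        ((hnum1.pow 2).add (hq.pow 2)).continuousOn.sqrt
      intro x hx
      have := sqden_pos a b x ha ha1 hb 1 (Or.inl rfl) hx.1 hx.2
      simp only [one_mul] at this
      positivity
    · apply Real.continuous_arcsin.comp_continuousOn
      apply ContinuousOn.div hnum2.continuousOn
        ((hnum2.pow 2).add (hq.pow 2)).continuousOn.sqrt
      intro x hx
      have h := sqden_pos a b x ha ha1 hb (-1) (Or.inr rfl) hx.1 hx.2
      have h2 : (2*(3-2*a)*Real.sqrt x + (-1)*(b*Real.sqrt (1-x)))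
          = 2*(3-2*a)*Real.sqrt x - b*Real.sqrt (1-x) := by ring
      rw [h2] at h
      positivity

lemma FF_zero (a b : ℝ) (ha : 0 < a) (hb : 0 < b) : FF a b 0 = 0 := by
  have h0 : Real.sqrt (0:ℝ) = 0 := Real.sqrt_zero
  have h1 : Real.sqrt (1-(0:ℝ)) = 1 := by norm_num
  rw [FF]
  rw [h0, h1]
  simp only [mul_zero, zero_mul, mul_one, add_zero, zero_add, sub_zero, zero_sub]
  rw [Real.arcsin_zero, neg_sq]
  simp only [neg_div, Real.arcsin_neg]
  norm_num

lemma FF_one (a b : ℝ) (ha : 0 < a) (ha1 : a < 1) (hb : 0 < b) :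
    FF a b 1 = -π + ((2-a)/a)*π := by
  have h0 : Real.sqrt (1-(1:ℝ)) = 0 := by norm_num
  have h1 : Real.sqrt (1:ℝ) = 1 := Real.sqrt_one
  have hk : (0:ℝ) < 2*(3-2*a) := by linarith
  rw [FF, h0, h1]
  simp only [mul_zero, zero_mul, mul_one, add_zero, sub_zero]
  rw [Real.arcsin_one]
  have e : Real.sqrt ((2*(3-2*a))^2 + 0^2) = 2*(3-2*a) := by
    rw [← Real.sqrt_sq hk.le]
    norm_num
  rw [e, div_self hk.ne', Real.arcsin_one]
  ring

lemma denom_pos (a x : ℝ) (ha : 0 < a) (ha1 : a < 1) :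
    0 < x^2 - ((a+2)/4)*x - 1/(16*(a-1)) := by
  have hP : 0 < 16*(1-a)*x^2 - 4*(1-a)*(2+a)*x + 1 := by
    nlinarith [sq_nonneg (16*(1-a)*x - 2*(1-a)*(2+a)),
      mul_pos (sub_pos.mpr ha1) (mul_pos (mul_pos ha ha) (show (0:ℝ) < a+3 by linarith))]
  have h16 : (0:ℝ) < 16*(1-a) := by linarith
  have he : (16*(1-a))*(x^2 - ((a+2)/4)*x - 1/(16*(a-1)))
      = 16*(1-a)*x^2 - 4*(1-a)*(2+a)*x + 1 := by
    have : a - 1 ≠ 0 := by linarith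
    field_simp
    ring
  nlinarith

open Real in
theorem stmt_17 (a : ℝ) (ha : a ∈ Set.Ioo (0:ℝ) 1) :
    ∫ x in (0:ℝ)..1, Real.sqrt (x*(1-x)) / (x^2 - ((a+2)/4)*x - 1/(16*(a-1))) =
      2*π*(1/a - 1) := by
  obtain ⟨ha0, ha1⟩ := ha
  have h3a : (0:ℝ) < (3+a)*(1-a) := by nlinarith
  set b : ℝ := 2*Real.sqrt ((3+a)*(1-a)) with hbdef
  have hbpos : 0 < b := by
    rw [hbdef]
    positivity
  have hb2 : b^2 = 4*(3+a)*(1-a) := by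
    rw [hbdef, mul_pow, Real.sq_sqrt h3a.le]
    ring
  set f' : ℝ → ℝ := fun x => Real.sqrt (x*(1-x)) / (x^2 - ((a+2)/4)*x - 1/(16*(a-1)))
    with hf'def
  have hcontf' : ContinuousOn f' (Set.uIcc (0:ℝ) 1) := by
    apply ContinuousOn.div
    · exact (Real.continuous_sqrt.comp (by continuity)).continuousOn
    · exact (by continuity : Continuous fun x : ℝ => x^2 - ((a+2)/4)*x - 1/(16*(a-1))).continuousOn
    · intro x _
      exact (denom_pos a x ha0 ha1).ne'
  have hint : IntervalIntegrable f' MeasureTheory.volume 0 1 := hcontf'.intervalIntegrable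
  have hderiv : ∀ x ∈ Set.Ioo (0:ℝ) 1, HasDerivWithinAt (FF a b) (f' x) (Set.Ioi x) x := by
    intro x hx
    have hEv : FF a b =ᶠ[nhds x] (fun y => -2 * Real.arctan (Real.sqrt y / Real.sqrt (1-y))
      + (-(1-a)/b) * (Real.log (2*(1-a)*y+1 + b*(Real.sqrt y*Real.sqrt (1-y)))
                    - Real.log (2*(1-a)*y+1 - b*(Real.sqrt y*Real.sqrt (1-y))))
      + ((2-a)/a) * (Real.arctan ((2*(3-2*a)*Real.sqrt y + b*Real.sqrt (1-y)) / (2*a*Real.sqrt (1-y)))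
                   + Real.arctan ((2*(3-2*a)*Real.sqrt y - b*Real.sqrt (1-y)) / (2*a*Real.sqrt (1-y))))) := by
      apply Filter.eventuallyEq_of_mem (isOpen_Ioo.mem_nhds hx)
      intro y hy
      exact FF_eq_G a b ha0 y hy
    have hG := hasDerivAt_G a b x ha0 ha1 hbpos hb2 hx.1 hx.2
    exact ((hEv.hasDerivAt_iff).mpr hG).hasDerivWithinAt
  have key := intervalIntegral.integral_eq_sub_of_hasDeriv_right_of_le (by norm_num)
    (continuousOn_FF a b ha0 ha1 hbpos hb2) hderiv hint
  rw [hf'def] at key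
  rw [key, FF_one a b ha0 ha1 hbpos, FF_zero a b ha0 hbpos]
  field_simp
  ring
end

section
/- For every real a ∈ (0,1), ∫₀¹ (√(1-x)/√x) / (x² - ((a+2)/4)x - 1/(16(a-1))) dx = 8π(1/a - 1). -/
open Real

noncomputable def Fx (a x : ℝ) : ℝ :=
  (-8*(1-a)/(2*Real.sqrt ((1-a)*(3+a)))) *
    (Real.log (1+2*(1-a)*x - 2*Real.sqrt ((1-a)*(3+a)) * Real.sqrt (x*(1-x)))
     - Real.log (1+2*(1-a)*x + 2*Real.sqrt ((1-a)*(3+a)) * Real.sqrt (x*(1-x))))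
  - (8*(1-a)/a) * Real.arccos (((4-2*a)*x - 1)/Real.sqrt (16*(1-a)*x^2 - 4*(1-a)*(2+a)*x + 1))

lemma Dpos (a x : ℝ) (ha0 : 0 < a) (ha1 : a < 1) :
    0 < 16*(1-a)*x^2 - 4*(1-a)*(2+a)*x + 1 := by
  nlinarith [mul_nonneg (by linarith : (0:ℝ) ≤ 1-a) (sq_nonneg (8*x-2-a)),
    mul_pos (mul_pos ha0 ha0) (by linarith : (0:ℝ) < 3+a)]

set_option maxHeartbeats 1000000 in
lemma keyDeriv (a x : ℝ) (ha0 : 0 < a) (ha1 : a < 1) (hx0 : 0 < x) (hx1 : x < 1) :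
    HasDerivAt (Fx a)
      ((Real.sqrt (1-x) / Real.sqrt x) / (x^2 - ((a+2)/4)*x - 1/(16*(a-1)))) x := by
  have hb : (0:ℝ) < 1 - a := by linarith
  have h3a : (0:ℝ) < 3 + a := by linarith
  have hx1' : (0:ℝ) < 1 - x := by linarith
  unfold Fx
  set α := 2*Real.sqrt ((1-a)*(3+a)) with hαdef
  have hα : 0 < α := by rw [hαdef]; positivity
  have hα2 : α^2 = 4*(1-a)*(3+a) := by
    rw [hαdef, mul_pow, Real.sq_sqrt (by positivity)]; ring
  set s := Real.sqrt (x*(1-x)) with hsdef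
  have hs : 0 < s := Real.sqrt_pos.mpr (by positivity)
  have hs2 : s^2 = x*(1-x) := Real.sq_sqrt (by positivity)
  have hD := Dpos a x ha0 ha1
  set r := Real.sqrt (16*(1-a)*x^2 - 4*(1-a)*(2+a)*x + 1) with hrdef
  have hr : 0 < r := Real.sqrt_pos.mpr hD
  have hr2 : r^2 = 16*(1-a)*x^2 - 4*(1-a)*(2+a)*x + 1 := Real.sq_sqrt hD.le
  have hPps : 0 < 1+2*(1-a)*x + α*s := by nlinarith [mul_pos hα hs]
  have hid : (1+2*(1-a)*x - α*s)*(1+2*(1-a)*x + α*s) = r^2 := by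
    rw [hr2]
    linear_combination (-(s^2))*hα2 + (-(4*(1-a)*(3+a)))*hs2
  have hPms : 0 < 1+2*(1-a)*x - α*s := by
    rcases mul_pos_iff.1 (show 0 < (1+2*(1-a)*x - α*s)*(1+2*(1-a)*x + α*s) from hid ▸ by positivity) with ⟨h,_⟩|⟨_,h⟩
    · exact h
    · linarith
  -- derivative of s
  have hSd : HasDerivAt (fun y => Real.sqrt (y*(1-y))) ((1-2*x)/(2*s)) x := by
    have h1 : HasDerivAt (fun y : ℝ => y*(1-y)) (1*(1-x)+x*(0-1)) x :=
      (hasDerivAt_id x).mul ((hasDerivAt_const x (1:ℝ)).sub (hasDerivAt_id x))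
    have h1 : HasDerivAt (fun y : ℝ => y*(1-y)) (1-2*x) x := by
      convert h1 using 1; ring
    have h2 := (Real.hasDerivAt_sqrt (show x*(1-x) ≠ 0 by positivity)).comp x h1
    refine h2.congr_deriv (Eq.symm ?_)
    rw [← hsdef]; ring
  -- derivative of logs
  have hlin : HasDerivAt (fun y : ℝ => 1+2*(1-a)*y) (0+2*(1-a)*1) x :=
    (hasDerivAt_const x (1:ℝ)).add ((hasDerivAt_id x).const_mul (2*(1-a)))
  have hlin : HasDerivAt (fun y : ℝ => 1+2*(1-a)*y) (2*(1-a)) x := by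
    convert hlin using 1; ring
  have hlogm : HasDerivAt (fun y => Real.log (1+2*(1-a)*y - α*Real.sqrt (y*(1-y))))
      ((2*(1-a) - α*((1-2*x)/(2*s)))/(1+2*(1-a)*x - α*s)) x :=
    (hlin.sub (hSd.const_mul α)).log (ne_of_gt hPms)
  have hlogp : HasDerivAt (fun y => Real.log (1+2*(1-a)*y + α*Real.sqrt (y*(1-y))))
      ((2*(1-a) + α*((1-2*x)/(2*s)))/(1+2*(1-a)*x + α*s)) x :=
    (hlin.add (hSd.const_mul α)).log (ne_of_gt hPps)
  -- derivative of r and m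
  have hDd : HasDerivAt (fun y => 16*(1-a)*y^2 - 4*(1-a)*(2+a)*y + 1)
      (32*(1-a)*x - 4*(1-a)*(2+a)) x := by
    have h := (((hasDerivAt_pow 2 x).const_mul (16*(1-a))).sub
        ((hasDerivAt_id x).const_mul (4*(1-a)*(2+a)))).add_const (1:ℝ)
    refine h.congr_deriv (Eq.symm ?_)
    push_cast
    ring
  have hrd : HasDerivAt (fun y => Real.sqrt (16*(1-a)*y^2 - 4*(1-a)*(2+a)*y + 1))
      ((32*(1-a)*x - 4*(1-a)*(2+a))/(2*r)) x := by
    have := (Real.hasDerivAt_sqrt hD.ne').comp x hDd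
    refine this.congr_deriv (Eq.symm ?_)
    rw [← hrdef]; ring
  have hnum : HasDerivAt (fun y : ℝ => (4-2*a)*y - 1) ((4-2*a)*1) x :=
    ((hasDerivAt_id x).const_mul (4-2*a)).sub_const (1:ℝ)
  have hnum : HasDerivAt (fun y : ℝ => (4-2*a)*y - 1) (4-2*a) x := by
    convert hnum using 1; ring
  have hmd : HasDerivAt (fun y => ((4-2*a)*y - 1)/Real.sqrt (16*(1-a)*y^2 - 4*(1-a)*(2+a)*y + 1))
      (((4-2*a)*r - ((4-2*a)*x-1)*((32*(1-a)*x - 4*(1-a)*(2+a))/(2*r)))/r^2) x :=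
    hnum.div hrd (ne_of_gt hr)
  -- m is strictly between -1 and 1
  have hlt : (((4-2*a)*x-1))^2 < r^2 := by
    rw [hr2]; nlinarith [mul_pos (mul_pos (mul_pos ha0 ha0) hx0) hx1']
  have hne1 : ((4-2*a)*x-1)/r ≠ -1 := by
    have h : (-1:ℝ) < ((4-2*a)*x-1)/r := by
      rw [lt_div_iff₀ hr]; nlinarith
    exact h.ne'
  have hne2 : ((4-2*a)*x-1)/r ≠ 1 := by
    have h : (4-2*a)*x-1 < r := by nlinarith
    exact ne_of_lt ((div_lt_one hr).mpr h)
  have harc0 := (Real.hasDerivAt_arccos hne1 hne2).comp x hmd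
  simp only [Function.comp_def] at harc0
  have hsq : Real.sqrt (1 - (((4-2*a)*x-1)/r)^2) = 2*a*s/r := by
    have h2 : 1 - (((4-2*a)*x-1)/r)^2 = (2*a*s/r)^2 := by
      rw [div_pow, div_pow, hr2]
      rw [eq_div_iff hD.ne']
      rw [sub_mul, div_mul_cancel₀ _ hD.ne']
      linear_combination (-4*a^2)*hs2
    rw [h2, Real.sqrt_sq (by positivity)]
  rw [hsq] at harc0
  have hF := ((hlogm.sub hlogp).const_mul (-8*(1-a)/(2*Real.sqrt ((1-a)*(3+a))))).sub
    (harc0.const_mul (8*(1-a)/a))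
  rw [← hαdef] at hF
  refine hF.congr_deriv (Eq.symm ?_)
  have hQr : x^2 - ((a+2)/4)*x - 1/(16*(a-1)) = r^2/(16*(1-a)) := by
    have h1 : (a:ℝ) - 1 ≠ 0 := by intro h; nlinarith
    have h2 : (1:ℝ) - a ≠ 0 := by intro h; nlinarith
    rw [hr2]; field_simp; ring
  have hxx : Real.sqrt x * Real.sqrt x = x := Real.mul_self_sqrt hx0.le
  have hsx : Real.sqrt (1-x)/Real.sqrt x = s/x := by
    rw [hsdef, Real.sqrt_mul hx0.le]
    field_simp
    linear_combination -hxx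
  rw [hQr, hsx]
  clear hF harc0 hmd hnum hrd hDd hlogm hlogp hlin hSd hsq hlt hne1 hne2
  have e1 : (2*(1-a) - α*((1-2*x)/(2*s)))/(1+2*(1-a)*x - α*s)
      - (2*(1-a) + α*((1-2*x)/(2*s)))/(1+2*(1-a)*x + α*s)
      = α*((4-2*a)*x-1)/(s*r^2) := by
    rw [div_sub_div _ _ hPms.ne' hPps.ne', hid]
    rw [div_eq_div_iff (by positivity) (by positivity)]
    field_simp
    linear_combination (16*(1-a)*Real.sqrt ((1-a)*(3+a)))*hs2
  have e2 : -(1/(2*a*s/r)) * (((4-2*a)*r - ((4-2*a)*x-1)*((32*(1-a)*x - 4*(1-a)*(2+a))/(2*r)))/r^2)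
      = -(a*(1+2*(1-a)*x))/(s*r^2) := by
    clear_value α s r
    field_simp
    linear_combination (4*a-8)*hr2
  rw [e1, e2]
  clear_value α s r
  field_simp
  linear_combination 16*hs2


lemma u1pos (a x : ℝ) (ha0 : 0 < a) (ha1 : a < 1) (hx : x ∈ Set.Icc (0:ℝ) 1) :
    0 < 1+2*(1-a)*x - 2*Real.sqrt ((1-a)*(3+a)) * Real.sqrt (x*(1-x)) := by
  obtain ⟨hx0, hx1⟩ := hx
  have hb : (0:ℝ) < 1-a := by linarith
  have h3a : (0:ℝ) < 3+a := by linarith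
  set α := 2*Real.sqrt ((1-a)*(3+a)) with hαdef
  have hα : 0 < α := by rw [hαdef]; positivity
  have hα2 : α^2 = 4*(1-a)*(3+a) := by
    rw [hαdef, mul_pow, Real.sq_sqrt (by positivity)]; ring
  set s := Real.sqrt (x*(1-x)) with hsdef
  have hs : 0 ≤ s := Real.sqrt_nonneg _
  have hs2 : s^2 = x*(1-x) := Real.sq_sqrt (by nlinarith)
  have hD := Dpos a x ha0 ha1
  have hPps : 0 < 1+2*(1-a)*x + α*s := by nlinarith [mul_nonneg hα.le hs]
  have hid : (1+2*(1-a)*x - α*s)*(1+2*(1-a)*x + α*s)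
      = 16*(1-a)*x^2 - 4*(1-a)*(2+a)*x + 1 := by
    linear_combination (-(s^2))*hα2 + (-(4*(1-a)*(3+a)))*hs2
  nlinarith [hD, hid, hPps]

lemma Fx1 (a : ℝ) (ha0 : 0 < a) (ha1 : a < 1) : Fx a 1 = 0 := by
  have h32 : (0:ℝ) < 3 - 2*a := by linarith
  unfold Fx
  rw [show 16*(1-a)*(1:ℝ)^2 - 4*(1-a)*(2+a)*1 + 1 = (3-2*a)^2 by ring,
    Real.sqrt_sq h32.le,
    show ((4-2*a)*(1:ℝ) - 1) = 3-2*a by ring, div_self h32.ne', Real.arccos_one,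
    show (1:ℝ)*(1-(1:ℝ)) = 0 by ring, Real.sqrt_zero]
  ring_nf

lemma Fx0 (a : ℝ) : Fx a 0 = -(8*(1-a)/a) * π := by
  unfold Fx
  rw [show (0:ℝ)*(1-(0:ℝ)) = 0 by ring, Real.sqrt_zero,
    show 16*(1-a)*(0:ℝ)^2 - 4*(1-a)*(2+a)*0 + 1 = 1 by ring, Real.sqrt_one,
    show ((4-2*a)*(0:ℝ) - 1)/1 = -1 by ring, Real.arccos_neg_one]
  ring_nf

open Real in
theorem stmt_18 (a : ℝ) (ha : a ∈ Set.Ioo (0:ℝ) 1) :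
    ∫ x in (0:ℝ)..1, (Real.sqrt (1-x) / Real.sqrt x) / (x^2 - ((a+2)/4)*x - 1/(16*(a-1))) =
      8*π*(1/a - 1) := by
  obtain ⟨ha0, ha1⟩ := ha
  have hb : (0:ℝ) < 1-a := by linarith
  have h3a : (0:ℝ) < 3+a := by linarith
  -- continuity of Fx a on [0,1]
  have hScont : Continuous (fun x : ℝ => Real.sqrt (x*(1-x))) :=
    Real.continuous_sqrt.comp (by continuity)
  have hrcont : Continuous (fun x : ℝ => Real.sqrt (16*(1-a)*x^2 - 4*(1-a)*(2+a)*x + 1)) :=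
    Real.continuous_sqrt.comp (by continuity)
  have hu2pos : ∀ x ∈ Set.Icc (0:ℝ) 1,
      0 < 1+2*(1-a)*x + 2*Real.sqrt ((1-a)*(3+a)) * Real.sqrt (x*(1-x)) := by
    intro x hx
    have h1 := u1pos a x ha0 ha1 hx
    have hs : 0 ≤ Real.sqrt (x*(1-x)) := Real.sqrt_nonneg _
    have hα : 0 ≤ 2*Real.sqrt ((1-a)*(3+a)) := by positivity
    nlinarith [mul_nonneg hα hs]
  have hcont : ContinuousOn (Fx a) (Set.Icc 0 1) := by
    have hu1 : Continuous (fun x : ℝ =>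
        1+2*(1-a)*x - 2*Real.sqrt ((1-a)*(3+a)) * Real.sqrt (x*(1-x))) := by fun_prop
    have hu2 : Continuous (fun x : ℝ =>
        1+2*(1-a)*x + 2*Real.sqrt ((1-a)*(3+a)) * Real.sqrt (x*(1-x))) := by fun_prop
    have hmc : ContinuousOn (fun x : ℝ =>
        ((4-2*a)*x - 1)/Real.sqrt (16*(1-a)*x^2 - 4*(1-a)*(2+a)*x + 1)) (Set.Icc 0 1) :=
      ContinuousOn.div (by fun_prop) (by fun_prop)
        (fun x _ => (Real.sqrt_pos.mpr (Dpos a x ha0 ha1)).ne')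
    unfold Fx
    apply ContinuousOn.sub
    · exact continuousOn_const.mul
        (((hu1.continuousOn).log (fun x hx => (u1pos a x ha0 ha1 hx).ne')).sub
          ((hu2.continuousOn).log (fun x hx => (hu2pos x hx).ne')))
    · exact continuousOn_const.mul (Real.continuous_arccos.comp_continuousOn hmc)
  -- integrability
  have hQpos : ∀ x : ℝ, 0 < x^2 - ((a+2)/4)*x - 1/(16*(a-1)) := by
    intro x
    have hD := Dpos a x ha0 ha1
    have h1 : (a:ℝ) - 1 ≠ 0 := by intro h; nlinarith
    have : x^2 - ((a+2)/4)*x - 1/(16*(a-1))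
        = (16*(1-a)*x^2 - 4*(1-a)*(2+a)*x + 1)/(16*(1-a)) := by
      field_simp; ring
    rw [this]; positivity
  have hqle : ∀ x : ℝ, a^2*(3+a)/(64*(1-a)) ≤ x^2 - ((a+2)/4)*x - 1/(16*(a-1)) := by
    intro x
    have h1 : (a:ℝ) - 1 ≠ 0 := by intro h; nlinarith
    have h2 : x^2 - ((a+2)/4)*x - 1/(16*(a-1))
        = (16*(1-a)*x^2 - 4*(1-a)*(2+a)*x + 1)/(16*(1-a)) := by
      field_simp; ring
    rw [h2, div_le_div_iff₀ (by positivity) (by positivity)]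
    nlinarith [mul_nonneg (mul_nonneg hb.le (sq_nonneg (8*x-2-a))) (by positivity : (0:ℝ) ≤ 16*(1-a))]
  have hint : IntervalIntegrable
      (fun x => (Real.sqrt (1-x) / Real.sqrt x) / (x^2 - ((a+2)/4)*x - 1/(16*(a-1))))
      MeasureTheory.volume 0 1 := by
    have hC : (0:ℝ) < 64*(1-a)/(a^2*(3+a)) := by positivity
    have hmaj : IntervalIntegrable (fun x : ℝ => 64*(1-a)/(a^2*(3+a)) * x ^ (-(1/2) : ℝ))
        MeasureTheory.volume 0 1 :=
      (intervalIntegral.intervalIntegrable_rpow' (by norm_num)).const_mul _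
    apply hmaj.mono_fun
    · apply Measurable.aestronglyMeasurable
      apply Measurable.div
      · exact (Real.continuous_sqrt.comp (by continuity)).measurable.div
          (Real.continuous_sqrt.measurable)
      · fun_prop
    · rw [Set.uIoc_of_le (by norm_num : (0:ℝ) ≤ 1)]
      filter_upwards [MeasureTheory.ae_restrict_mem measurableSet_Ioc] with x hx
      obtain ⟨hx0, hx1⟩ := hx
      have hsx : 0 < Real.sqrt x := Real.sqrt_pos.mpr hx0
      have hQ := hQpos x
      have hq := hqle x
      have hqpos : (0:ℝ) < a^2*(3+a)/(64*(1-a)) := by positivity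
      have hnn : 0 ≤ (Real.sqrt (1-x) / Real.sqrt x) / (x^2 - ((a+2)/4)*x - 1/(16*(a-1))) := by
        positivity
      rw [Real.norm_eq_abs, Real.norm_eq_abs, abs_of_nonneg hnn, abs_of_nonneg (by positivity)]
      have hrpow : x ^ (-(1/2) : ℝ) = 1 / Real.sqrt x := by
        rw [Real.rpow_neg hx0.le, Real.sqrt_eq_rpow]
        simp
      rw [hrpow]
      calc (Real.sqrt (1-x) / Real.sqrt x) / (x^2 - ((a+2)/4)*x - 1/(16*(a-1)))
          ≤ (1 / Real.sqrt x) / (a^2*(3+a)/(64*(1-a))) := by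
            exact div_le_div₀ (by positivity)
              ((div_le_div_iff_of_pos_right hsx).mpr (Real.sqrt_le_one.mpr (by linarith))) hqpos hq
          _ = 64*(1-a)/(a^2*(3+a)) * (1 / Real.sqrt x) := by
            field_simp
  have key := intervalIntegral.integral_eq_sub_of_hasDeriv_right_of_le
    (by norm_num : (0:ℝ) ≤ 1) hcont
    (fun x hx => (keyDeriv a x ha0 ha1 hx.1 hx.2).hasDerivWithinAt) hint
  rw [key, Fx1 a ha0 ha1, Fx0 a]
  field_simp
  ring
end

section
/- Let u₀ = 1 and suppose the sequences (uₙ)ₙ≥0 and (vₙ)ₙ≥1 of real numbers satisfy the convolution recursion u_{n+1} = Σ_{k=1}^{n+1} v_k · u_{n+1-k} for all n ≥ 0. If v_{n+1} = c^{n+1} Σ_{r=0}^{n} (1+q)^r Σ_{i₁+⋯+i_r = n-r, i_j ≥ 0} C_{i₁}⋯C_{i_r} (with the r = 0 term interpreted as δ_{n,0}) and the generating function T(x) = Σₙ uₙ xⁿ converges for |x| small, then T satisfies T(x) = 1 + cx·T(x)·(2 / (2 - (1+q)(1 - √(1 - 4cx)))) for all sufficiently small |x|, where c > 0 and q ∈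 [-1,1]; equivalently T(x) = (1 - q + (1+q)√(1-4cx)) / (1 - q + (1+q)√(1-4cx) - 2cx). -/
open Finset Finset.Nat Filter

private lemma catalan_le_four_pow (n : ℕ) : (catalan n : ℝ) ≤ 4 ^ n := by
  have h1 : catalan n ≤ n.centralBinom := by
    rw [catalan_eq_centralBinom_div]; exact Nat.div_le_self _ _
  have h2 : n.centralBinom ≤ 4 ^ n := by
    have h3 : (2*n).choose n ≤ ∑ k ∈ Finset.range (2*n+1), (2*n).choose k :=
      Finset.single_le_sum (fun i _ => Nat.zero_le _) (Finset.mem_range.2 (by omega))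
    rw [Nat.sum_range_choose] at h3
    calc n.centralBinom = (2*n).choose n := rfl
      _ ≤ 2 ^ (2*n) := h3
      _ = 4 ^ n := by rw [pow_mul]; norm_num
  exact_mod_cast h1.trans h2

private lemma norm_cat_le {y : ℝ} (hy : |y| ≤ 8⁻¹) (n : ℕ) :
    ‖(catalan n : ℝ) * y ^ n‖ ≤ (2⁻¹ : ℝ) ^ n := by
  rw [norm_mul, norm_pow, Real.norm_eq_abs, Real.norm_eq_abs,
    abs_of_nonneg (Nat.cast_nonneg _)]
  calc (catalan n : ℝ) * |y| ^ n ≤ 4 ^ n * 8⁻¹ ^ n := by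
        apply mul_le_mul (catalan_le_four_pow n) (pow_le_pow_left₀ (abs_nonneg _) hy n)
          (by positivity) (by positivity)
    _ = (2⁻¹ : ℝ) ^ n := by rw [← mul_pow]; norm_num

private lemma summable_norm_cat {y : ℝ} (hy : |y| ≤ 8⁻¹) :
    Summable fun n => ‖(catalan n : ℝ) * y ^ n‖ :=
  Summable.of_nonneg_of_le (fun n => norm_nonneg _) (norm_cat_le hy)
    (summable_geometric_of_lt_one (by norm_num) (by norm_num))

private noncomputable def catS (y : ℝ) : ℝ := ∑' n, (catalan n : ℝ) * y ^ n

private lemma hasSum_catS {y : ℝ} (hy : |y| ≤ 8⁻¹) :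
    HasSum (fun n => (catalan n : ℝ) * y ^ n) (catS y) :=
  (summable_norm_cat hy).of_norm.hasSum

private lemma catS_abs_le {y : ℝ} (hy : |y| ≤ 8⁻¹) : |catS y| ≤ 2 := by
  have h1 : |catS y| ≤ ∑' n, ‖(catalan n : ℝ) * y ^ n‖ := by
    rw [← Real.norm_eq_abs]
    exact norm_tsum_le_tsum_norm (summable_norm_cat hy)
  have h2 : ∑' n, ‖(catalan n : ℝ) * y ^ n‖ ≤ ∑' n : ℕ, (2⁻¹ : ℝ) ^ n :=
    Summable.tsum_le_tsum (norm_cat_le hy) (summable_norm_cat hy)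
      (summable_geometric_of_lt_one (by norm_num) (by norm_num))
  refine h1.trans (h2.trans ?_)
  rw [tsum_geometric_of_lt_one (by norm_num) (by norm_num)]
  norm_num

private lemma catS_eq {y : ℝ} (hy : |y| ≤ 8⁻¹) : catS y = 1 + y * catS y ^ 2 := by
  have hc := hasSum_catS hy
  have hnorm := summable_norm_cat hy
  have hmul : HasSum (fun n => ∑ ij ∈ antidiagonal n,
      ((catalan ij.1 : ℝ) * y ^ ij.1) * ((catalan ij.2 : ℝ) * y ^ ij.2))
      (catS y * catS y) := by
    have h1 := ((summable_norm_sum_mul_antidiagonal_of_summable_norm hnorm hnorm).of_norm).hasSum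
    rwa [← tsum_mul_tsum_eq_tsum_sum_antidiagonal_of_summable_norm hnorm hnorm,
      hc.tsum_eq] at h1
  have heq : (fun n => ∑ ij ∈ antidiagonal n,
      ((catalan ij.1 : ℝ) * y ^ ij.1) * ((catalan ij.2 : ℝ) * y ^ ij.2))
      = fun n => (catalan (n+1) : ℝ) * y ^ n := by
    funext n
    rw [catalan_succ']
    push_cast
    rw [Finset.sum_mul]
    refine Finset.sum_congr rfl fun ij hij => ?_
    have h := Finset.HasAntidiagonal.mem_antidiagonal.1 hij
    rw [← h, pow_add]; ring
  rw [heq] at hmul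
  have hmul2 := hmul.mul_right y
  have heq2 : (fun n => (catalan (n+1) : ℝ) * y ^ n * y)
      = fun n => (catalan (n+1) : ℝ) * y ^ (n+1) := by
    funext n; rw [pow_succ]; ring
  rw [heq2] at hmul2
  have h3 := (hasSum_nat_add_iff (f := fun n => (catalan n : ℝ) * y ^ n) 1).1 hmul2
  simp only [Finset.range_one, Finset.sum_singleton, pow_zero, catalan_zero,
    Nat.cast_one, mul_one] at h3
  have := hc.unique h3
  linear_combination this


private lemma ycat_eq {y : ℝ} (hy : |y| ≤ 16⁻¹) :
    y * catS y = (1 - Real.sqrt (1 - 4*y)) / 2 := by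
  have hy8 : |y| ≤ 8⁻¹ := hy.trans (by norm_num)
  have hq := catS_eq hy8
  have habs := catS_abs_le hy8
  obtain ⟨hy1, hy2⟩ := abs_le.1 hy
  have h1 : (1 - 2*(y*catS y))^2 = 1 - 4*y := by linear_combination (-4*y) * hq
  have h2 : 0 ≤ 1 - 2*(y*catS y) := by
    have hb : |y * catS y| ≤ 16⁻¹ * 2 := by
      rw [abs_mul]; exact mul_le_mul hy habs (abs_nonneg _) (by norm_num)
    obtain ⟨hb1, hb2⟩ := abs_le.1 hb
    linarith
  have h3 : Real.sqrt (1 - 4*y) = 1 - 2*(y*catS y) := by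
    rw [← h1, Real.sqrt_sq h2]
  rw [h3]; ring

private noncomputable def bb (r m : ℕ) : ℝ :=
  ∑ t ∈ antidiagonalTuple r m, ∏ j, (catalan (t j) : ℝ)

private lemma bb_nonneg (r m : ℕ) : 0 ≤ bb r m :=
  Finset.sum_nonneg fun t _ => Finset.prod_nonneg fun j _ => Nat.cast_nonneg _

private lemma bb_succ (r n : ℕ) :
    bb (r+1) n = ∑ ij ∈ antidiagonal n, (catalan ij.1 : ℝ) * bb r ij.2 := by
  unfold bb
  have h : ∑ ij ∈ antidiagonal n,
        (catalan ij.1 : ℝ) * ∑ t ∈ antidiagonalTuple r ij.2, ∏ j, (catalan (t j):ℝ)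
      = ∑ p ∈ (antidiagonal n).sigma (fun ij => antidiagonalTuple r ij.2),
          (catalan p.1.1 : ℝ) * ∏ j, (catalan (p.2 j) : ℝ) := by
    rw [Finset.sum_sigma]
    exact Finset.sum_congr rfl fun ij _ => Finset.mul_sum _ _ _
  rw [h]
  refine Finset.sum_nbij' (i := fun t => ⟨(t 0, ∑ i : Fin r, t i.succ), Fin.tail t⟩)
    (j := fun p => Fin.cons p.1.1 p.2) ?_ ?_ ?_ ?_ ?_
  · intro t ht
    rw [Finset.Nat.mem_antidiagonalTuple] at ht
    rw [Finset.mem_sigma, Finset.HasAntidiagonal.mem_antidiagonal, Finset.Nat.mem_antidiagonalTuple]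
    refine ⟨?_, rfl⟩
    rw [← ht, Fin.sum_univ_succ]
  · intro p hp
    rw [Finset.mem_sigma, Finset.HasAntidiagonal.mem_antidiagonal, Finset.Nat.mem_antidiagonalTuple] at hp
    rw [Finset.Nat.mem_antidiagonalTuple, Fin.sum_cons, hp.2, hp.1]
  · intro t ht
    exact Fin.cons_self_tail t
  · intro p hp
    rw [Finset.mem_sigma, Finset.HasAntidiagonal.mem_antidiagonal, Finset.Nat.mem_antidiagonalTuple] at hp
    refine Sigma.ext ?_ (heq_of_eq ?_)
    · simp only [Fin.cons_zero, Fin.cons_succ, Prod.ext_iff]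
      exact ⟨trivial, hp.2⟩
    · simp
  · intro t ht
    simp only [Fin.cons_zero]
    rw [Fin.prod_univ_succ]
    congr 1


private lemma bb_zero_zero : bb 0 0 = 1 := by simp [bb]

private lemma bb_zero_succ (m : ℕ) : bb 0 (m+1) = 0 := by simp [bb]

private lemma bb_eq (r m : ℕ) : bb r m = ∑ t ∈ Finset.Nat.antidiagonalTuple r m, ∏ j, (catalan (t j) : ℝ) := rfl


private lemma hasSum_bb (r : ℕ) : ∀ {y : ℝ}, |y| ≤ 16⁻¹ →
    HasSum (fun m => bb r m * y ^ m) (catS y ^ r) := by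
  induction r with
  | zero =>
    intro y hy
    have heq : (fun m => bb 0 m * y ^ m) = fun m => if m = 0 then (1:ℝ) else 0 := by
      funext m
      cases m with
      | zero => simp [bb_zero_zero]
      | succ m => simp [bb_zero_succ]
    rw [heq, pow_zero]
    exact hasSum_ite_eq 0 1
  | succ r ih =>
    intro y hy
    have hy8 : |y| ≤ 8⁻¹ := hy.trans (by norm_num)
    have hyy : |(|y|)| ≤ (16⁻¹:ℝ) := by rwa [abs_abs]
    have hnormb : Summable (fun m => ‖bb r m * y ^ m‖) := by
      refine (ih hyy).summable.congr fun m => ?_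
      rw [Real.norm_eq_abs, abs_mul, abs_pow, abs_of_nonneg (bb_nonneg r m)]
    have hnormc := summable_norm_cat hy8
    have hmul : HasSum (fun n => ∑ ij ∈ antidiagonal n,
        ((catalan ij.1 : ℝ) * y ^ ij.1) * (bb r ij.2 * y ^ ij.2)) (catS y ^ (r+1)) := by
      have h1 := ((summable_norm_sum_mul_antidiagonal_of_summable_norm hnormc hnormb).of_norm).hasSum
      rw [← tsum_mul_tsum_eq_tsum_sum_antidiagonal_of_summable_norm hnormc hnormb,
        (hasSum_catS hy8).tsum_eq, (ih hy).tsum_eq] at h1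
      rw [pow_succ']
      exact h1
    have heq : (fun n => ∑ ij ∈ antidiagonal n,
        ((catalan ij.1 : ℝ) * y ^ ij.1) * (bb r ij.2 * y ^ ij.2))
        = fun n => bb (r+1) n * y ^ n := by
      funext n
      rw [bb_succ, Finset.sum_mul]
      refine Finset.sum_congr rfl fun ij hij => ?_
      have h := Finset.HasAntidiagonal.mem_antidiagonal.1 hij
      rw [← h, pow_add]; ring
    rwa [heq] at hmul

private lemma hasSum_sum_antidiagonal {F : ℕ × ℕ → ℝ} (h : Summable F) :
    HasSum (fun n => ∑ p ∈ antidiagonal n, F p) (∑' p, F p) := by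
  have h1 : HasSum (F ∘ Finset.HasAntidiagonal.sigmaAntidiagonalEquivProd (A := ℕ)) (∑' p, F p) :=
    (Equiv.hasSum_iff _).2 h.hasSum
  refine HasSum.sigma h1 fun n => ?_
  have h2 := hasSum_fintype (f := fun c : (antidiagonal n : Finset (ℕ×ℕ)) => F c)
  rw [Finset.sum_coe_sort (antidiagonal n) F] at h2
  exact h2

private noncomputable def aaq (q : ℝ) (n : ℕ) : ℝ :=
  ∑ r ∈ Finset.range (n+1), (1+q)^r * bb r (n-r)

private lemma hasSum_aaq {q y : ℝ} (hq1 : -1 ≤ q) (hq2 : q ≤ 1) (hy : |y| ≤ 16⁻¹) :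
    HasSum (fun n => aaq q n * y ^ n) (1 - (1+q) * (y * catS y))⁻¹ := by
  have hy8 : |y| ≤ 8⁻¹ := hy.trans (by norm_num)
  have hyy : |(|y|)| ≤ (16⁻¹:ℝ) := by rwa [abs_abs]
  have hyy8 : |(|y|)| ≤ (8⁻¹:ℝ) := by rw [abs_abs]; exact hy8
  have hq0 : (0:ℝ) ≤ 1 + q := by linarith
  set F : ℕ × ℕ → ℝ := fun p => (1+q)^p.1 * bb p.1 p.2 * y ^ (p.1 + p.2) with hF
  -- rows at y
  have hrowF : ∀ r : ℕ, HasSum (fun m => F (r, m)) (((1+q) * y * catS y)^r) := by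
    intro r
    have h1 := (hasSum_bb r hy).mul_left ((1+q)^r * y^r)
    have heq : (fun m => (1+q)^r * y^r * (bb r m * y ^ m)) = fun m => F (r, m) := by
      funext m; simp only [hF, pow_add]; ring
    rw [heq] at h1
    have : (1+q)^r * y^r * catS y ^ r = ((1+q) * y * catS y)^r := by
      rw [mul_pow, mul_pow]
    rwa [this] at h1
  -- abs rows
  have habsF : ∀ p : ℕ × ℕ, |F p| = (1+q)^p.1 * bb p.1 p.2 * |y| ^ (p.1 + p.2) := by
    intro p
    rw [hF]
    simp only []
    rw [abs_mul, abs_mul, abs_pow, abs_pow, abs_of_nonneg hq0,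
      abs_of_nonneg (bb_nonneg _ _)]
  have hrowFabs : ∀ r : ℕ, HasSum (fun m => |F (r, m)|) (((1+q) * |y| * catS (|y|))^r) := by
    intro r
    have h1 := (hasSum_bb r hyy).mul_left ((1+q)^r * |y|^r)
    have heq : (fun m => (1+q)^r * |y|^r * (bb r m * |y| ^ m)) = fun m => |F (r, m)| := by
      funext m; rw [habsF]; simp only [pow_add]; ring
    rw [heq] at h1
    have : (1+q)^r * |y|^r * catS (|y|) ^ r = ((1+q) * |y| * catS (|y|))^r := by
      rw [mul_pow, mul_pow]
    rwa [this] at h1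
  -- ratio bounds
  have hcs : |catS (|y|)| ≤ 2 := catS_abs_le hyy8
  have hq2' : 1 + q ≤ 2 := by linarith
  have hratio_abs : (1+q) * |y| * catS (|y|) < 1 := by
    refine lt_of_le_of_lt (le_abs_self _) ?_
    rw [abs_mul, abs_mul, abs_of_nonneg hq0, abs_abs]
    calc (1+q) * |y| * |catS (|y|)| ≤ (2 * 16⁻¹) * 2 :=
          mul_le_mul (mul_le_mul hq2' hy (abs_nonneg _) (by norm_num)) hcs
            (abs_nonneg _) (by positivity)
      _ < 1 := by norm_num
  have hratio_nonneg : 0 ≤ (1+q) * |y| * catS (|y|) := by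
    have : 0 ≤ catS (|y|) := by
      have := (hasSum_catS hyy8).tsum_eq
      rw [← this]
      exact tsum_nonneg fun n => by positivity
    positivity
  -- summability of |F|
  have hFabs : Summable fun p : ℕ × ℕ => |F p| := by
    apply (summable_prod_of_nonneg fun p => abs_nonneg _).2
    constructor
    · intro r; exact (hrowFabs r).summable
    · have heq : (fun r => ∑' m, |F (r, m)|) = fun r => ((1+q) * |y| * catS (|y|))^r := by
        funext r; exact (hrowFabs r).tsum_eq
      rw [heq]
      exact summable_geometric_of_lt_one hratio_nonneg hratio_abs
  have hFs : Summable F := by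
    refine Summable.of_norm ?_
    simpa only [Real.norm_eq_abs] using hFabs
  -- value of full sum
  have hratio_y : |(1+q) * y * catS y| < 1 := by
    rw [abs_mul, abs_mul, abs_of_nonneg hq0]
    calc (1+q) * |y| * |catS y| ≤ (2 * 16⁻¹) * 2 :=
          mul_le_mul (mul_le_mul hq2' hy (abs_nonneg _) (by norm_num)) (catS_abs_le hy8)
            (abs_nonneg _) (by positivity)
      _ < 1 := by norm_num
  have htsum : ∑' p, F p = (1 - (1+q) * (y * catS y))⁻¹ := by
    rw [Summable.tsum_prod' hFs fun r => (hrowF r).summable]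
    have heq : (fun r => ∑' m, F (r, m)) = fun r => ((1+q) * y * catS y)^r := by
      funext r; exact (hrowF r).tsum_eq
    rw [heq, tsum_geometric_of_abs_lt_one hratio_y]
    ring_nf
  -- regroup
  have hreg := hasSum_sum_antidiagonal hFs
  rw [htsum] at hreg
  have heq : (fun n => ∑ p ∈ antidiagonal n, F p) = fun n => aaq q n * y ^ n := by
    funext n
    rw [Finset.Nat.sum_antidiagonal_eq_sum_range_succ_mk]
    unfold aaq
    rw [Finset.sum_mul]
    refine Finset.sum_congr rfl fun k hk => ?_
    have hk' : k ≤ n := Nat.lt_succ_iff.1 (Finset.mem_range.1 hk)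
    have : k + (n - k) = n := by omega
    rw [hF]
    simp only []
    rw [this]
  rwa [heq] at hreg


theorem stmt_19 (c q : ℝ) (hc : 0 < c) (hq : q ∈ Set.Icc (-1:ℝ) 1)
    (u v : ℕ → ℝ) (T : ℝ → ℝ)
    (hu0 : u 0 = 1)
    (hrec : ∀ n : ℕ, u (n+1) = ∑ k ∈ Finset.range (n+1), v (k+1) * u (n-k))
    (hv : ∀ n : ℕ, v (n+1) = c^(n+1) * ∑ r ∈ Finset.range (n+1), (1+q)^r *
        ∑ i ∈ Finset.Nat.antidiagonalTuple r (n-r), ∏ j, (catalan (i j) : ℝ))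
    (hT : ∃ ε > 0, ∀ x : ℝ, |x| < ε → HasSum (fun n => u n * x^n) (T x)) :
    ∃ δ > 0, ∀ x : ℝ, |x| < δ →
      T x = 1 + c*x*T x * (2 / (2 - (1+q)*(1 - Real.sqrt (1 - 4*c*x)))) ∧
      T x = (1 - q + (1+q)*Real.sqrt (1 - 4*c*x)) /
        (1 - q + (1+q)*Real.sqrt (1 - 4*c*x) - 2*c*x) := by
  obtain ⟨hq1, hq2⟩ := hq
  obtain ⟨ε, hε, hTsum⟩ := hT
  have hq0 : (0:ℝ) ≤ 1 + q := by linarith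
  refine ⟨min (ε/2) (1/(16*c)), lt_min (by linarith) (by positivity), fun x hx => ?_⟩
  have hxε2 : |x| < ε/2 := lt_of_lt_of_le hx (min_le_left _ _)
  have hxε : |x| < ε := by linarith
  have hy : |c*x| ≤ 16⁻¹ := by
    have h1 : |x| < 1/(16*c) := lt_of_lt_of_le hx (min_le_right _ _)
    have h2 : c * |x| < c * (1/(16*c)) := mul_lt_mul_of_pos_left h1 hc
    have h3 : c * (1/(16*c)) = 16⁻¹ := by field_simp
    rw [abs_mul, abs_of_pos hc]
    linarith
  have hyabs : |(|c*x|)| ≤ (16⁻¹:ℝ) := by rwa [abs_abs]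
  have hv' : ∀ n, v (n+1) = c^(n+1) * aaq q n := fun n => by
    rw [hv n]
    unfold aaq
    congr 1
  have haaq_nonneg : ∀ n, 0 ≤ aaq q n := fun n =>
    Finset.sum_nonneg fun r _ => mul_nonneg (pow_nonneg hq0 r) (bb_nonneg _ _)
  have hA := hasSum_aaq hq1 hq2 hy
  have hAabs := hasSum_aaq hq1 hq2 hyabs
  set R := (1 - (1+q) * ((c*x) * catS (c*x)))⁻¹ with hRdef
  have hV : HasSum (fun n => v (n+1) * x^(n+1)) (R * (c*x)) := by
    have h1 := hA.mul_right (c*x)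
    have heq : (fun n => aaq q n * (c*x)^n * (c*x)) = fun n => v (n+1) * x^(n+1) := by
      funext n
      rw [hv' n, mul_pow, pow_succ, pow_succ]
      ring
    rwa [heq] at h1
  have hg : HasSum (fun n => if n = 0 then (0:ℝ) else v n * x^n) (R * (c*x)) := by
    have h1 : HasSum (fun n => (fun m => if m = 0 then (0:ℝ) else v m * x^m) (n+1)) (R*(c*x)) := by
      simpa using hV
    have h2 := (hasSum_nat_add_iff (f := fun m => if m = 0 then (0:ℝ) else v m * x^m) 1).1 h1
    simpa using h2
  have hvnn : ∀ n, 0 ≤ v (n+1) := fun n => by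
    rw [hv' n]; exact mul_nonneg (by positivity) (haaq_nonneg n)
  have hgnorm : Summable (fun n => ‖if n = 0 then (0:ℝ) else v n * x^n‖) := by
    have h1 : Summable (fun n => ‖(fun m => if m = 0 then (0:ℝ) else v m * x^m) (n+1)‖) := by
      refine ((hAabs.mul_right (|c*x|)).summable).congr fun n => ?_
      show aaq q n * |c*x|^n * |c*x| = ‖if (n+1:ℕ) = 0 then (0:ℝ) else v (n+1) * x^(n+1)‖
      rw [Real.norm_eq_abs, if_neg (Nat.succ_ne_zero n), abs_mul c x, abs_of_pos hc,
        abs_mul (v (n+1)), abs_pow, abs_of_nonneg (hvnn n), hv' n]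
      ring
    exact (summable_nat_add_iff 1).1 h1
  have hux := hTsum x hxε
  have hu2 := hTsum (2*|x|) (by rw [abs_of_nonneg (by positivity)]; linarith [abs_nonneg x])
  obtain ⟨M, hM⟩ : ∃ M, ∀ n, |u n * (2*|x|)^n| ≤ M := by
    obtain ⟨M, hM⟩ := (hu2.summable.tendsto_atTop_zero.abs).bddAbove_range
    exact ⟨M, fun n => hM (Set.mem_range_self n)⟩
  have hunorm : Summable (fun n => ‖u n * x^n‖) := by
    refine Summable.of_nonneg_of_le (fun n => norm_nonneg _) (fun n => ?_)
      ((summable_geometric_of_lt_one (by norm_num) (by norm_num : (2⁻¹:ℝ) < 1)).mul_left M)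
    have h1 : ‖u n * x^n‖ = |u n * (2*|x|)^n| * (2⁻¹:ℝ)^n := by
      rw [Real.norm_eq_abs, abs_mul, abs_mul, abs_pow, abs_pow,
        abs_of_nonneg (show (0:ℝ) ≤ 2*|x| by positivity)]
      rw [mul_assoc, ← mul_pow]
      ring
    rw [h1]
    exact mul_le_mul_of_nonneg_right (hM n) (by positivity)
  set W : ℕ → ℝ := fun n => ∑ ij ∈ antidiagonal n,
    (if ij.1 = 0 then (0:ℝ) else v ij.1 * x^ij.1) * (u ij.2 * x^ij.2) with hW
  have hcauchy : HasSum W (R * (c*x) * T x) := by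
    have h1 := ((summable_norm_sum_mul_antidiagonal_of_summable_norm hgnorm hunorm).of_norm).hasSum
    rwa [← tsum_mul_tsum_eq_tsum_sum_antidiagonal_of_summable_norm hgnorm hunorm,
      hg.tsum_eq, hux.tsum_eq] at h1
  have hW0 : W 0 = 0 := by simp [hW]
  have hid : ∀ n : ℕ, W (n+1) = u (n+1) * x^(n+1) := by
    intro n
    have : W (n+1) = ∑ k ∈ Finset.range (n+1), v (k+1) * u (n-k) * x^(n+1) := by
      rw [hW]
      simp only []
      rw [Finset.Nat.sum_antidiagonal_eq_sum_range_succ_mk, Finset.sum_range_succ']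
      rw [if_pos rfl, zero_mul, add_zero]
      refine Finset.sum_congr rfl fun k hk => ?_
      rw [if_neg (Nat.succ_ne_zero k), Nat.succ_sub_succ]
      have hk' : k ≤ n := Nat.lt_succ_iff.1 (Finset.mem_range.1 hk)
      have hpow : x^(k+1) * x^(n-k) = x^(n+1) := by
        rw [← pow_add]; congr 1; omega
      rw [show v (k+1) * x^(k+1) * (u (n-k) * x^(n-k))
        = v (k+1) * u (n-k) * (x^(k+1) * x^(n-k)) from by ring, hpow]
    rw [this, ← Finset.sum_mul, ← hrec n]
  have h2 := (hasSum_nat_add_iff' (f := W) 1).2 hcauchy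
  have h3 := (hasSum_nat_add_iff' (f := fun n => u n * x^n) 1).2 hux
  simp only [Finset.range_one, Finset.sum_singleton, hW0, sub_zero, pow_zero, mul_one, hu0] at h2 h3
  have hid' : (fun n => W (n+1)) = fun n => u (n+1) * x^(n+1) := funext hid
  rw [hid'] at h2
  have hkey : R * (c*x) * T x = T x - 1 := h2.unique h3
  have hTeq : T x = 1 + R * (c*x) * T x := by linarith
  have hsy : (c*x) * catS (c*x) = (1 - Real.sqrt (1 - 4*(c*x))) / 2 := ycat_eq hy
  have hsqrt_arg : (1:ℝ) - 4*c*x = 1 - 4*(c*x) := by ring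
  set s := Real.sqrt (1 - 4*c*x) with hs
  have hs' : Real.sqrt (1 - 4*(c*x)) = s := by rw [hs, hsqrt_arg]
  obtain ⟨hy1, hy2⟩ := abs_le.1 hy
  have hsq : s^2 = 1 - 4*c*x := by
    rw [hs]; rw [Real.sq_sqrt]; nlinarith
  have hs0 : 0 ≤ s := Real.sqrt_nonneg _
  have hs34 : (3:ℝ)/4 ≤ s := by nlinarith
  have hs2 : s ≤ 2 := by nlinarith
  have hDpos : (3:ℝ)/2 ≤ 2 - (1+q)*(1-s) := by nlinarith
  have hD0 : 2 - (1+q)*(1-s) ≠ 0 := ne_of_gt (by linarith)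
  have hR2 : R = 2 / (2 - (1+q)*(1-s)) := by
    rw [hRdef, hsy, hs',
      show 1 - (1+q)*((1 - s)/2) = (2 - (1+q)*(1-s))/2 from by ring, inv_div]
  constructor
  · rw [show c*x*T x * (2/(2 - (1+q)*(1-s))) = R * (c*x) * T x from by rw [hR2]; ring]
    exact hTeq
  · have h := hTeq
    rw [hR2] at h
    have hkey2 : T x * ((2 - (1+q)*(1-s)) - 2*(c*x)) = 2 - (1+q)*(1-s) := by
      field_simp at h
      linear_combination h
    have hden : 1 - q + (1+q)*s - 2*c*x ≠ 0 := by
      refine ne_of_gt ?_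
      nlinarith
    rw [eq_div_iff hden]
    linear_combination hkey2
end
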